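/- arXiv:1511.06048 — 5 statements merged into one kernel-verified Lean document; each statement's English description precedes it below -/
import Mathlib

section
/- Let L be a first-order language all of whose symbols are function symbols of arity ≥ 1, and let 𝔄 be an L-structure with underlying set A. The following are equivalent: (1) 𝔄 is a Ramsey algebra; (2) for every a : ℕ → A the induced orderly L-algebra 𝔄_a is a Ramsey orderly L-algebra; (3) for every a : ℕ → A the induced orderly L-algebra 𝔄_a is a weakly Ramsey orderly L-algebra. -/
open Function Set

universe u v w

/-- Terms of a purely functional first-order language whose function symbols
of arity `n` form the type `F n`, with variables indexed by `ℕ`. -/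
inductive Tm (F : ℕ → Type u) : Type u
  | var : ℕ → Tm F
  | func : {n : ℕ} → F n → (Fin n → Tm F) → Tm F

namespace Tm

variable {F : ℕ → Type u} {A : Type v} {β : Type w}

/-- The list of (indices of) variables occurring in a term, from left to right. -/
def varList : Tm F → List ℕ
  | .var i => [i]
  | .func (n := n) _ ts => (List.finRange n).flatMap fun i => (ts i).varList

/-- A term is *orderly* if the indices of the variables occurring in it,
read from left to right, are strictly increasing. -/
def Orderly (t : Tm F) : Prop := t.varList.Chain' (· < ·)

/-- `TermLT s t` iff the index of the last variable of `s` is less than the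
index of the first variable of `t`. -/
def TermLT (s t : Tm F) : Prop :=
  ∃ i j, s.varList.getLast? = some i ∧ t.varList.head? = some j ∧ i < j

/-- An infinite sequence of orderly terms is *admissible* iff it is increasing
with respect to `TermLT`. -/
def Admissible (ts : ℕ → Tm F) : Prop :=
  (∀ i, (ts i).Orderly) ∧ ∀ i, TermLT (ts i) (ts (i + 1))

/-- `s.subst σ` replaces each variable `vᵢ` in `s` by `σ i`. -/
def subst (σ : ℕ → Tm F) : Tm F → Tm F
  | .var i => σ i
  | .func f ts => .func f fun i => (ts i).subst σ

/-- Interpretation of a term in a structure with underlying set `A` whose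
interpretation of the function symbols is `I`, under the assignment `a`. -/
def realize (I : ∀ n, F n → (Fin n → A) → A) (a : ℕ → A) : Tm F → A
  | .var i => a i
  | .func (n := n) f ts => I n f fun i => (ts i).realize I a

end Tm

section General

variable {F : ℕ → Type u} {A : Type v} {β : Type w}

/-- `b` is a reduction of `a` (with respect to the algebra `(A, I)`). -/
def SeqReduction (I : ∀ n, F n → (Fin n → A) → A) (b a : ℕ → A) : Prop :=
  ∃ ts : ℕ → Tm F, Tm.Admissible ts ∧ ∀ i, b i = (ts i).realize I a

/-- The set of finite reductions of `a`. -/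
def FR (I : ∀ n, F n → (Fin n → A) → A) (a : ℕ → A) : Set A :=
  { x | ∃ t : Tm F, t.Orderly ∧ x = t.realize I a }

/-- `(A, I)` is a Ramsey algebra. -/
def RamseyAlg (I : ∀ n, F n → (Fin n → A) → A) : Prop :=
  ∀ (a : ℕ → A) (X : Set A),
    ∃ b, SeqReduction I b a ∧ (FR I b ⊆ X ∨ FR I b ∩ X = ∅)

/-- `(A, I)` is Ramsey below `a`. -/
def RamseyBelow (I : ∀ n, F n → (Fin n → A) → A) (a : ℕ → A) : Prop :=
  ∀ b, SeqReduction I b a → ∀ X : Set A,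
    ∃ c, SeqReduction I c b ∧ (FR I c ⊆ X ∨ FR I c ∩ X = ∅)

/-- An increasing tuple `t₁ < t₂ < ⋯ < tₙ` of orderly terms. -/
def OrdTuple {n : ℕ} (t : Fin n → Tm F) : Prop :=
  (∀ i, (t i).Orderly) ∧ ∀ i j : Fin n, i < j → Tm.TermLT (t i) (t j)

/-- `𝒜` (as a function on orderly terms) is an orderly algebra. -/
def IsOrderlyAlg (𝒜 : Tm F → β) : Prop :=
  ∀ (n : ℕ) (f : F n) (t t' : Fin n → Tm F), OrdTuple t → OrdTuple t' →
    (∀ k, 𝒜 (t k) = 𝒜 (t' k)) → 𝒜 (.func f t) = 𝒜 (.func f t')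

/-- The universe of an orderly algebra: its range on orderly terms. -/
def OAUniv (𝒜 : Tm F → β) : Set β := 𝒜 '' { t | t.Orderly }

/-- `ℬ` is a reduction of the orderly algebra `𝒜` (as functions on orderly terms). -/
def OAReduction (ℬ 𝒜 : Tm F → β) : Prop :=
  ∃ ts : ℕ → Tm F, Tm.Admissible ts ∧ ∀ s : Tm F, s.Orderly → ℬ s = 𝒜 (s.subst ts)

/-- `ℬ` is homogeneous for `X`. -/
def Homog (ℬ : Tm F → β) (X : Set β) : Prop :=
  OAUniv ℬ ⊆ X ∨ OAUniv ℬ ∩ X = ∅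

/-- An orderly algebra is weakly Ramsey. -/
def WeaklyRamseyOA (𝒜 : Tm F → β) : Prop :=
  ∀ X ⊆ OAUniv 𝒜, ∃ ℬ, OAReduction ℬ 𝒜 ∧ Homog ℬ X

/-- An orderly algebra is Ramsey. -/
def RamseyOA (𝒜 : Tm F → β) : Prop :=
  ∀ ℬ, OAReduction ℬ 𝒜 → ∀ X ⊆ OAUniv 𝒜, ∃ 𝒞, OAReduction 𝒞 ℬ ∧ Homog 𝒞 X

/-- The orderly algebra induced from the algebra `(A, I)` by the sequence `a`. -/
def inducedOA (I : ∀ n, F n → (Fin n → A) → A) (a : ℕ → A) : Tm F → A :=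
  fun t => t.realize I a

/-- `[FR(c)]ⁿ_<` : increasing `n`-tuples of finite reductions of `c`. -/
def FRtuple (I : ∀ n, F n → (Fin n → A) → A) (n : ℕ) (c : ℕ → A) : Set (Fin n → A) :=
  { x | ∃ t : Fin n → Tm F, OrdTuple t ∧ ∀ i, x i = (t i).realize I c }

/-- `‖𝒞‖ⁿ_<` for an orderly algebra `𝒞`. -/
def OATuple (n : ℕ) (𝒞 : Tm F → β) : Set (Fin n → β) :=
  { x | ∃ t : Fin n → Tm F, OrdTuple t ∧ ∀ i, x i = 𝒞 (t i) }

/-- The basic set `[n, a]` of the preorder with approximations `(ᵂA, ≤)`. -/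
def Approx (I : ∀ n, F n → (Fin n → A) → A) (n : ℕ) (a : ℕ → A) : Set (ℕ → A) :=
  { b | SeqReduction I b a ∧ ∀ i < n, b i = a i }

/-- The natural topology on `ᵂA`, generated by the sets `[n, a]`. -/
def natTop (I : ∀ n, F n → (Fin n → A) → A) : TopologicalSpace (ℕ → A) :=
  TopologicalSpace.generateFrom { S | ∃ n a, S = Approx I n a }

/-- A subset `X ⊆ ᵂA` is Ramsey. -/
def RamseySet (I : ∀ n, F n → (Fin n → A) → A) (X : Set (ℕ → A)) : Prop :=
  ∀ (n : ℕ) (a : ℕ → A), ∃ b ∈ Approx I n a,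
    Approx I n b ⊆ X ∨ Approx I n b ∩ X = ∅

/-- `X` has the property of Baire in the natural topology:
its symmetric difference with some open set is meager. -/
def HasBaireProperty (I : ∀ n, F n → (Fin n → A) → A) (X : Set (ℕ → A)) : Prop :=
  ∃ U : Set (ℕ → A), @IsOpen _ (natTop I) U ∧ @IsMeagre _ (natTop I) (symmDiff X U)

end General

/-- The language with a single binary function symbol. -/
inductive BinF : ℕ → Type
  | f : BinF 2

/-- Application of the binary function symbol: the term `f s t`. -/
def fapp (s t : Tm BinF) : Tm BinF := .func BinF.f ![s, t]

/-- The interpretation of the single binary function symbol by a binary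
operation `g` on `A`. -/
def binI {A : Type v} (g : A → A → A) : ∀ n, BinF n → (Fin n → A) → A
  | _, BinF.f, args => g (args 0) (args 1)

/-- The pair `(tˣ, tʸ)`: `(vᵢˣ, vᵢʸ) = (v_{2i}, v_{2i+1})` and
`((f s t)ˣ, (f s t)ʸ) = (f sˣ sʸ, f tˣ tʸ)`. -/
def xyPair : Tm BinF → Tm BinF × Tm BinF
  | .var i => (.var (2 * i), .var (2 * i + 1))
  | .func BinF.f ts =>
      (fapp (xyPair (ts 0)).1 (xyPair (ts 0)).2, fapp (xyPair (ts 1)).1 (xyPair (ts 1)).2)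

/-- The orderly algebra `♯𝒜`, `♯𝒜(t) = (𝒜(tˣ), 𝒜(tʸ))`. -/
def sharpOA {β : Type w} (𝒜 : Tm BinF → β) : Tm BinF → β × β :=
  fun t => (𝒜 (xyPair t).1, 𝒜 (xyPair t).2)
section Aux

variable {F : ℕ → Type u} {A : Type v}

lemma List.flatMap_assoc' {α : Type*} (l : List α) (f : α → List ℕ) (g : ℕ → List ℕ) :
    (l.flatMap f).flatMap g = l.flatMap fun x => (f x).flatMap g := by
  induction l with
  | nil => simp
  | cons a t ih => simp [ih]

lemma Tm.realize_subst (I : ∀ n, F n → (Fin n → A) → A) (a : ℕ → A) (σ : ℕ → Tm F) :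
    ∀ s : Tm F, (s.subst σ).realize I a = s.realize I (fun i => (σ i).realize I a)
  | .var _ => rfl
  | .func f ts => by
      simp only [Tm.subst, Tm.realize]
      congr 1
      funext i
      exact Tm.realize_subst I a σ (ts i)

lemma Tm.varList_subst (σ : ℕ → Tm F) :
    ∀ s : Tm F, (s.subst σ).varList = s.varList.flatMap fun i => (σ i).varList
  | .var i => by simp [Tm.subst, Tm.varList]
  | .func f ts => by
      simp only [Tm.subst, Tm.varList]
      rw [List.flatMap_assoc']
      congr 1
      funext i
      exact Tm.varList_subst σ (ts i)

lemma chain'_lt_head_le_last : ∀ {l : List ℕ}, l.Chain' (· < ·) →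
    ∀ {x y : ℕ}, l.head? = some x → l.getLast? = some y → x ≤ y
  | [], _, _, _, h, _ => by simp at h
  | [a], _, x, y, hx, hy => by
      simp at hx hy; omega
  | a :: b :: t, hc, x, y, hx, hy => by
      unfold List.Chain' at hc
      rw [List.isChain_cons_cons] at hc
      simp only [List.head?_cons, Option.some.injEq] at hx
      have := chain'_lt_head_le_last hc.2 (x := b) (y := y) rfl
        (by rw [← hy]; exact (List.getLast?_cons_cons ..).symm ▸ rfl)
      omega

lemma Tm.Admissible.termLT {ts : ℕ → Tm F} (h : Tm.Admissible ts) :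
    ∀ i j, i < j → Tm.TermLT (ts i) (ts j) := by
  intro i j hij
  induction j with
  | zero => omega
  | succ j ih =>
    rcases Nat.lt_succ_iff_lt_or_eq.mp hij with hij' | rfl
    · obtain ⟨x, y, hx, hy, hxy⟩ := ih hij'
      obtain ⟨y', z, hy', hz, hyz⟩ := h.2 j
      refine ⟨x, z, hx, hz, ?_⟩
      have := chain'_lt_head_le_last (h.1 j) hy hy'
      omega
    · exact h.2 i

lemma chain'_lt_flatMap {g : ℕ → List ℕ} : ∀ {l : List ℕ},
    l.Chain' (· < ·) →
    (∀ i, (g i).Chain' (· < ·)) →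
    (∀ i j, i < j → ∀ x ∈ (g i).getLast?, ∀ y ∈ (g j).head?, x < y) →
    (∀ i, g i ≠ []) →
    (l.flatMap g).Chain' (· < ·)
  | [], _, _, _, _ => by simp [List.Chain']
  | a :: l, hl, hg, hlt, hne => by
      unfold List.Chain'
      rw [List.flatMap_cons, List.isChain_append]
      unfold List.Chain' at hl
      rw [List.isChain_cons] at hl
      refine ⟨hg a, chain'_lt_flatMap hl.2 hg hlt hne, ?_⟩
      intro x hx y hy
      cases l with
      | nil => simp at hy
      | cons b t =>
        rw [List.flatMap_cons, List.head?_append] at hy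
        cases hgb : (g b).head? with
        | none => exact absurd (List.head?_eq_none_iff.mp hgb) (hne b)
        | some z =>
          rw [hgb] at hy
          have hyz : z = y := by simpa [Option.or] using hy
          subst hyz
          exact hlt a b (hl.1 b rfl) x hx z (by rw [hgb]; rfl)

lemma Tm.Admissible.orderly_subst {ts : ℕ → Tm F} (h : Tm.Admissible ts)
    {s : Tm F} (hs : s.Orderly) : (s.subst ts).Orderly := by
  rw [Tm.Orderly, Tm.varList_subst]
  refine chain'_lt_flatMap hs (fun i => h.1 i) ?_ ?_
  · intro i j hij x hx y hy
    obtain ⟨x', y', hx', hy', hlt⟩ := h.termLT i j hij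
    rw [hx'] at hx; rw [hy'] at hy
    simp only [Option.mem_def, Option.some.injEq] at hx hy
    omega
  · intro i
    obtain ⟨x, _, hx, _, _⟩ := h.2 i
    intro hnil
    rw [hnil] at hx
    simp at hx

lemma Tm.subst_var : ∀ s : Tm F, s.subst (Tm.var) = s
  | .var _ => rfl
  | .func f ts => by
      simp only [Tm.subst]
      congr 1
      funext i
      exact Tm.subst_var (ts i)

lemma admissible_var : Tm.Admissible (F := F) (fun i => .var i) :=
  ⟨fun i => by simp [Tm.Orderly, Tm.varList, List.Chain'],
   fun i => ⟨i, i + 1, rfl, rfl, Nat.lt_succ_self i⟩⟩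

lemma oaReduction_self (𝒜 : Tm F → A) : OAReduction 𝒜 𝒜 :=
  ⟨fun i => .var i, admissible_var, fun s _ => by rw [Tm.subst_var]⟩

lemma FR_eq_OAUniv (I : ∀ n, F n → (Fin n → A) → A) (b : ℕ → A) :
    FR I b = OAUniv (inducedOA I b) := by
  ext x
  simp only [FR, OAUniv, inducedOA, Set.mem_image, Set.mem_setOf_eq]
  constructor
  · rintro ⟨t, ht, rfl⟩; exact ⟨t, ht, rfl⟩
  · rintro ⟨t, ht, rfl⟩; exact ⟨t, ht, rfl⟩

end Aux


/-- TFAE: (1) `(A, I)` is a Ramsey algebra; (2) every induced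
orderly algebra `𝔄_a` is Ramsey; (3) every induced orderly algebra `𝔄_a` is
weakly Ramsey. -/
theorem ramsey_algebra_tfae {F : ℕ → Type u} [IsEmpty (F 0)] {A : Type v}
    (I : ∀ n, F n → (Fin n → A) → A) :
    (RamseyAlg I ↔ ∀ a : ℕ → A, RamseyOA (inducedOA I a)) ∧
    ((∀ a : ℕ → A, RamseyOA (inducedOA I a)) ↔
      ∀ a : ℕ → A, WeaklyRamseyOA (inducedOA I a)) := by
  constructor
  · constructor
    · -- RamseyAlg → RamseyOA
      rintro hR a ℬ ⟨ts, hts, hB⟩ X hX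
      set b : ℕ → A := fun i => (ts i).realize I a with hb
      have hBb : ∀ s : Tm F, s.Orderly → ℬ s = s.realize I b := by
        intro s hs
        rw [hB s hs, inducedOA, Tm.realize_subst]
      obtain ⟨c, ⟨ts', hts', hc⟩, hhom⟩ := hR b X
      refine ⟨inducedOA I c, ⟨ts', hts', ?_⟩, ?_⟩
      · intro s hs
        rw [hBb _ (hts'.orderly_subst hs), inducedOA, Tm.realize_subst]
        congr 1
        funext i
        exact hc i
      · rw [Homog, ← FR_eq_OAUniv]
        exact hhom
    · -- RamseyOA → RamseyAlg
      intro h a X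
      obtain ⟨𝒞, ⟨ts, hts, h𝒞⟩, hhom⟩ :=
        h a (inducedOA I a) (oaReduction_self _) (X ∩ OAUniv (inducedOA I a))
          Set.inter_subset_right
      refine ⟨fun i => (ts i).realize I a, ⟨ts, hts, fun i => rfl⟩, ?_⟩
      set b : ℕ → A := fun i => (ts i).realize I a with hb
      have hCb : ∀ s : Tm F, s.Orderly → 𝒞 s = s.realize I b := by
        intro s hs
        rw [h𝒞 s hs, inducedOA, Tm.realize_subst]
      have hFR : FR I b = OAUniv 𝒞 := by
        ext x
        simp only [FR, OAUniv, Set.mem_image, Set.mem_setOf_eq]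
        constructor
        · rintro ⟨t, ht, rfl⟩; exact ⟨t, ht, hCb t ht⟩
        · rintro ⟨t, ht, rfl⟩; exact ⟨t, ht, hCb t ht⟩
      have hsub : FR I b ⊆ OAUniv (inducedOA I a) := by
        rintro x ⟨t, ht, rfl⟩
        exact ⟨t.subst ts, hts.orderly_subst ht, Tm.realize_subst I a ts t⟩
      rcases hhom with hin | hout
      · left; rw [hFR]; exact hin.trans Set.inter_subset_left
      · right
        rw [Set.eq_empty_iff_forall_notMem] at hout ⊢
        intro x ⟨hx1, hx2⟩
        exact hout x ⟨hFR ▸ hx1, hx2, hsub hx1⟩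
  · constructor
    · -- RamseyOA → WeaklyRamseyOA
      intro h a X hX
      exact h a (inducedOA I a) (oaReduction_self _) X hX
    · -- WeaklyRamseyOA → RamseyOA
      rintro h a ℬ ⟨ts, hts, hB⟩ X hX
      set b : ℕ → A := fun i => (ts i).realize I a with hb
      have hBb : ∀ s : Tm F, s.Orderly → ℬ s = s.realize I b := by
        intro s hs
        rw [hB s hs, inducedOA, Tm.realize_subst]
      obtain ⟨𝒞, ⟨ts', hts', h𝒞⟩, hhom⟩ :=
        h b (X ∩ OAUniv (inducedOA I b)) Set.inter_subset_right
      have hCb : ∀ s : Tm F, s.Orderly → 𝒞 s = (s.subst ts').realize I b := by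
        intro s hs
        rw [h𝒞 s hs, inducedOA, Tm.realize_subst]
      refine ⟨𝒞, ⟨ts', hts', ?_⟩, ?_⟩
      · intro s hs
        rw [hCb s hs, hBb _ (hts'.orderly_subst hs)]
      · have hCsub : OAUniv 𝒞 ⊆ OAUniv (inducedOA I b) := by
          rintro x ⟨t, ht, rfl⟩
          exact ⟨t.subst ts', hts'.orderly_subst ht, (hCb t ht).symm⟩
        rcases hhom with hin | hout
        · left; exact hin.trans Set.inter_subset_left
        · right
          rw [Set.eq_empty_iff_forall_notMem] at hout ⊢
          intro x ⟨hx1, hx2⟩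
          exact hout x ⟨hx1, hx2, hCsub hx1⟩
end

section
/- If A is an infinite set and f : A × A → A is a one-to-one (injective) binary operation on A, then the algebra (A, f), regarded as a structure for the language with a single binary function symbol interpreted as f, is not a Ramsey algebra. -/
open Function Set

universe u v w

section AuxNotRamsey

variable {A : Type v}

/-- A left-component extraction for an injective binary operation. -/
noncomputable def lInv (f : A × A → A) : A → A :=
  fun z => @dite _ (∃ p, f p = z) (Classical.propDecidable _)
    (fun h => (Classical.choose h).1) (fun _ => z)

lemma lInv_f {f : A × A → A} (hf : Function.Injective f) (x y : A) :
    lInv f (f (x, y)) = x := by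
  unfold lInv
  have h : ∃ p, f p = f (x, y) := ⟨(x, y), rfl⟩
  rw [dif_pos h]
  have hsp := Classical.choose_spec h
  have : Classical.choose h = (x, y) := hf hsp
  rw [this]

/-- Every term value over the constant assignment `c` reaches `c` by
iterating `lInv f`. -/
lemma reach_anchor {f : A × A → A} (hf : Function.Injective f) (c : A) (t : Tm BinF) :
    ∃ n, (lInv f)^[n] (t.realize (binI fun x y => f (x, y)) (fun _ => c)) = c := by
  induction t with
  | var i => exact ⟨0, rfl⟩
  | func fn ts ih =>
    cases fn
    obtain ⟨n, hn⟩ := ih 0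
    refine ⟨n + 1, ?_⟩
    rw [Function.iterate_succ_apply]
    have hreal : (Tm.func BinF.f ts).realize (binI fun x y => f (x, y)) (fun _ => c)
        = f ((ts 0).realize (binI fun x y => f (x, y)) (fun _ => c),
            (ts 1).realize (binI fun x y => f (x, y)) (fun _ => c)) := rfl
    rw [hreal, lInv_f hf]
    exact hn

/-- There is an anchor `c` such that no `f`-value of an element reaching `c`
equals `c`. -/
lemma exists_anchor [Infinite A] {f : A × A → A} (hf : Function.Injective f) :
    ∃ c : A, ∀ x y : A, (∃ n, (lInv f)^[n] x = c) → f (x, y) ≠ c := by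
  by_cases h1 : ∃ c : A, c ∉ Set.range f
  · obtain ⟨c, hc⟩ := h1
    exact ⟨c, fun x y _ hxy => hc ⟨(x, y), hxy⟩⟩
  by_cases h2 : ∃ c : A, ∀ k : ℕ, (lInv f)^[k + 1] c ≠ c
  · obtain ⟨c, hc⟩ := h2
    refine ⟨c, fun x y hx hxy => ?_⟩
    obtain ⟨n, hn⟩ := hx
    apply hc n
    rw [Function.iterate_succ_apply, ← hxy, lInv_f hf, hxy]
    exact hn
  -- otherwise every point is `lInv f`-periodic, contradicting infiniteness
  exfalso
  push_neg at h1 h2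
  obtain ⟨x₀⟩ : Nonempty A := inferInstance
  obtain ⟨p, hp⟩ := h2 x₀
  set l := lInv f with hl
  -- the orbit of x₀ is finite
  set S : Set A := (fun k => l^[k] x₀) '' (Set.Iic p) with hS
  have hSfin : S.Finite := Set.Finite.image _ (Set.finite_Iic p)
  have horb : ∀ k : ℕ, l^[k] x₀ ∈ S := by
    intro k
    induction k using Nat.strong_induction_on with
    | _ k ih =>
      by_cases hk : k ≤ p
      · exact ⟨k, hk, rfl⟩
      · push_neg at hk
        have hk' : k = (k - (p + 1)) + (p + 1) := by omega
        have : l^[k] x₀ = l^[k - (p + 1)] x₀ := by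
          conv_lhs => rw [hk']
          rw [Function.iterate_add_apply, hp]
        rw [this]
        exact ih _ (by omega)
  have hmem : ∀ y : A, f (x₀, y) ∈ S := by
    intro y
    obtain ⟨q, hq⟩ := h2 (f (x₀, y))
    have : f (x₀, y) = l^[q] x₀ := by
      conv_lhs => rw [← hq]
      rw [Function.iterate_succ_apply, hl, lInv_f hf]
    rw [this]
    exact horb q
  haveI : Finite S := hSfin.to_subtype
  have hinj : Function.Injective (fun y : A => (⟨f (x₀, y), hmem y⟩ : S)) := by
    intro y y' hyy
    have : f (x₀, y) = f (x₀, y') := congrArg Subtype.val hyy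
    exact (Prod.ext_iff.mp (hf this)).2
  haveI : Finite A := Finite.of_injective _ hinj
  exact not_finite A

end AuxNotRamsey

/-- If `A` is infinite and `f : A × A → A` is injective,
then `(A, f)` is not a Ramsey algebra. -/
theorem injective_binary_not_ramsey {A : Type v} [Infinite A]
    (f : A × A → A) (hf : Function.Injective f) :
    ¬ RamseyAlg (binI fun x y => f (x, y)) := by
  classical
  intro hR
  obtain ⟨c, Hc⟩ := exists_anchor hf
  set l := lInv f with hl
  set I := binI fun x y : A => f (x, y) with hI
  -- the coloring: parity of the minimal number of `l`-steps to reach `c`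
  set X : Set A := {x | ∃ n, l^[n] x = c ∧ Even n ∧ ∀ m < n, l^[m] x ≠ c} with hX
  -- key flip lemma
  have flip : ∀ x y : A, (∃ n, l^[n] x = c) → (f (x, y) ∈ X ↔ x ∉ X) := by
    intro x y hx
    set n₀ := Nat.find hx with hn₀def
    have hn₀ : l^[n₀] x = c := Nat.find_spec hx
    have hmin : ∀ m < n₀, l^[m] x ≠ c := fun m hm => Nat.find_min hx hm
    have hxX : x ∈ X ↔ Even n₀ := by
      constructor
      · rintro ⟨n, h1, h2, h3⟩
        have hle : n₀ ≤ n := Nat.find_le h1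
        have hge : n ≤ n₀ := by
          by_contra hlt
          exact h3 n₀ (by omega) hn₀
        have : n = n₀ := le_antisymm hge hle
        rwa [this] at h2
      · intro he
        exact ⟨n₀, hn₀, he, hmin⟩
    have hznec : f (x, y) ≠ c := Hc x y hx
    have hz0 : l^[n₀ + 1] (f (x, y)) = c := by
      rw [Function.iterate_succ_apply, hl, lInv_f hf]
      exact hn₀
    have hzmin : ∀ m < n₀ + 1, l^[m] (f (x, y)) ≠ c := by
      intro m hm
      match m with
      | 0 => exact hznec
      | k + 1 =>
        rw [Function.iterate_succ_apply, hl, lInv_f hf]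
        exact hmin k (by omega)
    have hzX : f (x, y) ∈ X ↔ Even (n₀ + 1) := by
      constructor
      · rintro ⟨n, h1, h2, h3⟩
        have hge : n ≤ n₀ + 1 := by
          by_contra hlt
          exact h3 (n₀ + 1) (by omega) hz0
        have hle : n₀ + 1 ≤ n := by
          by_contra hlt
          exact hzmin n (by omega) h1
        have : n = n₀ + 1 := le_antisymm hge hle
        rwa [this] at h2
      · intro he
        exact ⟨n₀ + 1, hz0, he, hzmin⟩
    rw [hzX, hxX, Nat.even_add_one]
  -- apply Ramsey-ness to the constant sequence and the coloring X
  obtain ⟨b, ⟨ts, hadm, hb⟩, hhom⟩ := hR (fun _ => c) X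
  -- b 0 reaches c
  have hreach : ∃ n, l^[n] (b 0) = c := by
    rw [hb 0]
    exact reach_anchor hf c (ts 0)
  -- the two relevant elements of FR I b
  have he0 : b 0 ∈ FR I b := by
    refine ⟨Tm.var 0, ?_, rfl⟩
    simp [Tm.Orderly, Tm.varList]
    exact List.isChain_singleton _
  have he1 : f (b 0, b 1) ∈ FR I b := by
    refine ⟨fapp (Tm.var 0) (Tm.var 1), ?_, ?_⟩
    · show ((fapp (Tm.var 0) (Tm.var 1)).varList).Chain' (· < ·)
      have : (fapp (Tm.var 0) (Tm.var 1)).varList = [0, 1] := by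
        show ((List.finRange 2).flatMap _) = [0, 1]
        rfl
      rw [this]
      exact List.isChain_pair.mpr (by norm_num)
    · rfl
  have hflip := flip (b 0) (b 1) hreach
  rcases hhom with hsub | hdis
  · have h0 : b 0 ∈ X := hsub he0
    have h1 : f (b 0, b 1) ∈ X := hsub he1
    exact (hflip.mp h1) h0
  · have h0 : b 0 ∉ X := by
      intro h0
      have : b 0 ∈ FR I b ∩ X := ⟨he0, h0⟩
      rw [hdis] at this
      exact this
    have h1 : f (b 0, b 1) ∈ X := hflip.mpr h0
    have : f (b 0, b 1) ∈ FR I b ∩ X := ⟨he1, h1⟩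
    rw [hdis] at this
    exact this
end

section
/- Let L be a first-order language all of whose symbols are function symbols of arity ≥ 1, and let 𝒜 be an orderly L-algebra whose universe ‖𝒜‖ is finite. Then 𝒜 is weakly Ramsey if and only if 𝒜 has a reduction that is a trivial orderly L-algebra (i.e., a constant function on orderly terms). -/
open Function Set

universe u v w

namespace WR12

open List

variable {F : ℕ → Type u} {β : Type w}

lemma varList_ne_nil [IsEmpty (F 0)] : ∀ t : Tm F, t.varList ≠ []
  | .var i => by simp [Tm.varList]
  | .func (n := n) f ts => by
      have hn : n ≠ 0 := by rintro rfl; exact (IsEmpty.false f)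
      have h0 : (0 : ℕ) < n := Nat.pos_of_ne_zero hn
      have h1 := varList_ne_nil (ts ⟨0, h0⟩)
      simp only [Tm.varList, ne_eq, List.flatMap_eq_nil_iff, not_forall]
      exact ⟨⟨0, h0⟩, by simp, h1⟩

lemma orderly_iff_pairwise {t : Tm F} : t.Orderly ↔ t.varList.Pairwise (· < ·) :=
  List.isChain_iff_pairwise

lemma varList_subst (σ : ℕ → Tm F) :
    ∀ t : Tm F, (t.subst σ).varList = t.varList.flatMap (fun i => (σ i).varList)
  | .var i => by simp [Tm.subst, Tm.varList]
  | .func (n := n) f ts => by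
      show ((List.finRange n).flatMap fun i => ((ts i).subst σ).varList) = _
      rw [show (Tm.func f ts).varList = (List.finRange n).flatMap (fun i => (ts i).varList) from rfl,
        List.flatMap_assoc]
      exact List.flatMap_congr fun i _ => varList_subst σ (ts i)

lemma mem_varList_subst {σ : ℕ → Tm F} {t : Tm F} {j : ℕ} :
    j ∈ (t.subst σ).varList ↔ ∃ i ∈ t.varList, j ∈ (σ i).varList := by
  simp [varList_subst σ t]

/-- all variables of `s` are less than all variables of `t`. -/
def AllLT (s t : Tm F) : Prop := ∀ i ∈ s.varList, ∀ j ∈ t.varList, i < j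

lemma orderly_subst {t : Tm F} (ht : t.Orderly) {σ : ℕ → Tm F}
    (h1 : ∀ i, (σ i).Orderly) (h2 : ∀ i j, i < j → AllLT (σ i) (σ j)) :
    (t.subst σ).Orderly := by
  rw [orderly_iff_pairwise] at ht ⊢
  rw [varList_subst, List.pairwise_flatMap]
  exact ⟨fun a _ => orderly_iff_pairwise.mp (h1 a), ht.imp fun hij => h2 _ _ hij⟩

lemma allLT_subst {s t : Tm F} (h : AllLT s t) {σ : ℕ → Tm F}
    (h2 : ∀ i j, i < j → AllLT (σ i) (σ j)) : AllLT (s.subst σ) (t.subst σ) := by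
  intro a ha b hb
  obtain ⟨i, hi, hai⟩ := mem_varList_subst.mp ha
  obtain ⟨j, hj, hbj⟩ := mem_varList_subst.mp hb
  exact h2 i j (h i hi j hj) a hai b hbj

lemma termLT_of_allLT [IsEmpty (F 0)] {s t : Tm F} (h : AllLT s t) : Tm.TermLT s t := by
  have hs := varList_ne_nil s
  have ht := varList_ne_nil t
  exact ⟨s.varList.getLast hs, t.varList.head ht, List.getLast?_eq_some_getLast hs,
    List.head?_eq_head ht, h _ (List.getLast_mem hs) _ (List.head_mem ht)⟩

lemma le_of_mem_getLast? {l : List ℕ} (hp : l.Pairwise (· < ·)) {a i : ℕ}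
    (ha : a ∈ l) (hi : l.getLast? = some i) : a ≤ i := by
  induction l with
  | nil => simp at ha
  | cons x xs ih =>
    cases xs with
    | nil =>
      simp only [List.getLast?_singleton, Option.some_inj] at hi
      simp only [List.mem_singleton] at ha
      omega
    | cons y ys =>
      rw [List.getLast?_cons_cons] at hi
      rcases List.mem_cons.mp ha with rfl | ha'
      · have him : i ∈ y :: ys := List.mem_of_getLast? hi
        exact le_of_lt ((List.pairwise_cons.mp hp).1 i him)
      · exact ih (List.pairwise_cons.mp hp).2 ha' hi

lemma ge_of_mem_head? {l : List ℕ} (hp : l.Pairwise (· < ·)) {b j : ℕ}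
    (hb : b ∈ l) (hj : l.head? = some j) : j ≤ b := by
  cases l with
  | nil => simp at hb
  | cons x xs =>
    simp only [List.head?_cons, Option.some_inj] at hj
    subst hj
    rcases List.mem_cons.mp hb with rfl | hb'
    · exact le_refl _
    · exact le_of_lt ((List.pairwise_cons.mp hp).1 b hb')

lemma allLT_of_termLT {s t : Tm F} (hs : s.Orderly) (ht : t.Orderly)
    (h : Tm.TermLT s t) : AllLT s t := by
  obtain ⟨i, j, hi, hj, hij⟩ := h
  intro a ha b hb
  have h1 := le_of_mem_getLast? (orderly_iff_pairwise.mp hs) ha hi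
  have h2 := ge_of_mem_head? (orderly_iff_pairwise.mp ht) hb hj
  omega

end WR12
namespace WR12

open List

variable {F : ℕ → Type u} {β : Type w}

lemma exists_mem_varList [IsEmpty (F 0)] (t : Tm F) : ∃ i, i ∈ t.varList := by
  have := varList_ne_nil t
  exact ⟨t.varList.head this, List.head_mem this⟩

lemma admissible_allLT [IsEmpty (F 0)] {σ : ℕ → Tm F} (h : Tm.Admissible σ) :
    ∀ {k l : ℕ}, k < l → AllLT (σ k) (σ l) := by
  have hcons : ∀ k, AllLT (σ k) (σ (k + 1)) := fun k =>
    allLT_of_termLT (h.1 k) (h.1 (k + 1)) (h.2 k)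
  intro k l hkl
  induction l with
  | zero => omega
  | succ m ih =>
    rcases Nat.lt_or_ge k m with hm | hm
    · intro a ha b hb
      obtain ⟨c, hc⟩ := exists_mem_varList (σ m)
      exact lt_trans (ih hm a ha c hc) (hcons m c hc b hb)
    · have : k = m := by omega
      subst this; exact hcons k

lemma admissible_comp [IsEmpty (F 0)] {σ : ℕ → Tm F} (h : Tm.Admissible σ)
    {e : ℕ → ℕ} (he : ∀ k, e k < e (k + 1)) : Tm.Admissible (fun k => σ (e k)) :=
  ⟨fun k => h.1 (e k), fun k => termLT_of_allLT (admissible_allLT h (he k))⟩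

lemma admissible_var_ge [IsEmpty (F 0)] {σ : ℕ → Tm F} (h : Tm.Admissible σ) :
    ∀ k, ∀ i ∈ (σ k).varList, k ≤ i := by
  intro k
  induction k with
  | zero => intro i _; omega
  | succ m ih =>
    intro i hi
    obtain ⟨j, hj⟩ := exists_mem_varList (σ m)
    have h1 := ih j hj
    have h2 := admissible_allLT h (Nat.lt_succ_self m) j hj i hi
    omega

lemma subst_subst (σ τ : ℕ → Tm F) :
    ∀ t : Tm F, (t.subst σ).subst τ = t.subst (fun i => (σ i).subst τ)
  | .var i => rfl
  | .func f ts =>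
    congrArg (Tm.func f) (funext fun i => subst_subst σ τ (ts i))

lemma orderly_func_parts [IsEmpty (F 0)] {n : ℕ} {f : F n} {ts : Fin n → Tm F}
    (h : (Tm.func f ts).Orderly) :
    (∀ i, (ts i).Orderly) ∧ ∀ i j : Fin n, i < j → AllLT (ts i) (ts j) := by
  rw [orderly_iff_pairwise] at h
  rw [show (Tm.func f ts).varList = (List.finRange n).flatMap (fun i => (ts i).varList) from rfl,
    List.pairwise_flatMap] at h
  constructor
  · exact fun i => orderly_iff_pairwise.mpr (h.1 i (List.mem_finRange i))
  · have h2 := List.pairwise_iff_getElem.mp h.2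
    intro i j hij
    have hi : (i : ℕ) < (List.finRange n).length := by simp [i.isLt]
    have hj : (j : ℕ) < (List.finRange n).length := by simp [j.isLt]
    have := h2 i j hi hj hij
    simpa [AllLT] using this

lemma key [IsEmpty (F 0)] {𝒜 : Tm F → β} (h𝒜 : IsOrderlyAlg 𝒜) {τ ρ : ℕ → Tm F}
    (hτ : Tm.Admissible τ) (hρ : Tm.Admissible ρ) (t : Tm F) (ht : t.Orderly)
    (hv : ∀ i ∈ t.varList, 𝒜 (τ i) = 𝒜 (ρ i)) :
    𝒜 (t.subst τ) = 𝒜 (t.subst ρ) := by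
  induction t with
  | var i => exact hv i (by simp [Tm.varList])
  | func f ts ih =>
    rename_i n
    obtain ⟨hsub, hcross⟩ := orderly_func_parts ht
    have hstep : ∀ (γ : ℕ → Tm F), Tm.Admissible γ →
        OrdTuple (fun i => (ts i).subst γ) := by
      intro γ hγ
      refine ⟨fun i => orderly_subst (hsub i) hγ.1 (fun i j h => admissible_allLT hγ h), ?_⟩
      intro i j hij
      exact termLT_of_allLT (allLT_subst (hcross i j hij)
        (fun i j h => admissible_allLT hγ h))
    have hvals : ∀ k, 𝒜 ((ts k).subst τ) = 𝒜 ((ts k).subst ρ) := by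
      intro k
      refine ih k (hsub k) (fun i hi => hv i ?_)
      show i ∈ (List.finRange n).flatMap (fun i => (ts i).varList)
      exact List.mem_flatMap.mpr ⟨k, List.mem_finRange k, hi⟩
    exact h𝒜 n f _ _ (hstep τ hτ) (hstep ρ hρ) hvals

lemma le_foldr_max : ∀ {l : List ℕ}, ∀ i ∈ l, i ≤ l.foldr max 0 := by
  intro l
  induction l with
  | nil => simp
  | cons x xs ih =>
    intro i hi
    rcases List.mem_cons.mp hi with rfl | hi'
    · exact le_max_left _ _
    · exact le_trans (ih i hi') (le_max_right _ _)

end WR12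
namespace WR12

open List

variable {F : ℕ → Type u} {β : Type w}

/-- `c` is a persistent value: realized by orderly terms arbitrarily far right. -/
def Pers (𝒜 : Tm F → β) (c : β) : Prop :=
  ∀ N, ∃ t : Tm F, t.Orderly ∧ 𝒜 t = c ∧ ∀ i ∈ t.varList, N ≤ i

/-- The subalgebra generated by `c`. -/
def Gen (𝒜 : Tm F → β) (c : β) : Set β :=
  {d | ∃ (s : Tm F) (τ : ℕ → Tm F), s.Orderly ∧ Tm.Admissible τ ∧
    (∀ k, 𝒜 (τ k) = c) ∧ d = 𝒜 (s.subst τ)}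

noncomputable def persSeq {𝒜 : Tm F → β} {c : β} (hc : Pers 𝒜 c) : ℕ → Tm F
  | 0 => (hc 0).choose
  | k + 1 => (hc ((persSeq hc k).varList.foldr max 0 + 1)).choose

lemma persSeq_spec [IsEmpty (F 0)] {𝒜 : Tm F → β} {c : β} (hc : Pers 𝒜 c) :
    Tm.Admissible (persSeq hc) ∧ ∀ k, 𝒜 (persSeq hc k) = c := by
  have h0 : ∀ k, (persSeq hc k).Orderly ∧ 𝒜 (persSeq hc k) = c := by
    intro k
    cases k with
    | zero => exact ⟨(hc 0).choose_spec.1, (hc 0).choose_spec.2.1⟩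
    | succ m =>
      exact ⟨(hc _).choose_spec.1, (hc _).choose_spec.2.1⟩
  have h1 : ∀ k, Tm.TermLT (persSeq hc k) (persSeq hc (k + 1)) := by
    intro k
    apply termLT_of_allLT
    intro a ha b hb
    have hbound := (hc ((persSeq hc k).varList.foldr max 0 + 1)).choose_spec.2.2 b hb
    have := le_foldr_max a ha
    omega
  exact ⟨⟨fun k => (h0 k).1, h1⟩, fun k => (h0 k).2⟩

lemma pers_admissible [IsEmpty (F 0)] {𝒜 : Tm F → β} {c : β} (hc : Pers 𝒜 c) :
    ∃ τ : ℕ → Tm F, Tm.Admissible τ ∧ ∀ k, 𝒜 (τ k) = c :=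
  ⟨persSeq hc, (persSeq_spec hc).1, (persSeq_spec hc).2⟩

lemma gen_elim [IsEmpty (F 0)] {𝒜 : Tm F → β} (h𝒜 : IsOrderlyAlg 𝒜) {c d : β}
    (hd : d ∈ Gen 𝒜 c) {τ : ℕ → Tm F} (hτ : Tm.Admissible τ)
    (hvc : ∀ k, 𝒜 (τ k) = c) : ∃ s : Tm F, s.Orderly ∧ d = 𝒜 (s.subst τ) := by
  obtain ⟨s, ρ, hs, hρ, hvρ, rfl⟩ := hd
  exact ⟨s, hs, (key h𝒜 hρ hτ s hs (fun i _ => by rw [hvρ i, hvc i])).symm ▸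
    (key h𝒜 hρ hτ s hs (fun i _ => by rw [hvρ i, hvc i]))⟩

lemma gen_intro {𝒜 : Tm F → β} {c : β} {s : Tm F} (hs : s.Orderly)
    {τ : ℕ → Tm F} (hτ : Tm.Admissible τ) (hvc : ∀ k, 𝒜 (τ k) = c) :
    𝒜 (s.subst τ) ∈ Gen 𝒜 c :=
  ⟨s, τ, hs, hτ, hvc, rfl⟩

lemma orderly_var (i : ℕ) : (Tm.var i : Tm F).Orderly := by
  rw [orderly_iff_pairwise]
  simp [Tm.varList]

lemma gen_self [IsEmpty (F 0)] {𝒜 : Tm F → β} {c : β} (hc : Pers 𝒜 c) :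
    c ∈ Gen 𝒜 c := by
  obtain ⟨τ, hτ, hvc⟩ := pers_admissible hc
  have := gen_intro (𝒜 := 𝒜) (orderly_var 0) hτ hvc
  simpa [Tm.subst, hvc 0] using this

lemma gen_sub_univ {𝒜 : Tm F → β} {c : β} [IsEmpty (F 0)] :
    Gen 𝒜 c ⊆ OAUniv 𝒜 := by
  rintro d ⟨s, τ, hs, hτ, hvc, rfl⟩
  exact ⟨s.subst τ, orderly_subst hs hτ.1 (fun i j h => admissible_allLT hτ h), rfl⟩

lemma pers_mem_univ {𝒜 : Tm F → β} {c : β} (hc : Pers 𝒜 c) : c ∈ OAUniv 𝒜 := by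
  obtain ⟨t, ht, htc, -⟩ := hc 0
  exact ⟨t, ht, htc⟩

end WR12
namespace WR12

open List

variable {F : ℕ → Type u} {β : Type w}

lemma subst_var (τ : ℕ → Tm F) (e : ℕ → ℕ) (t : Tm F) :
    (t.subst (fun i => Tm.var (e i))).subst τ = t.subst (fun i => τ (e i)) := by
  rw [subst_subst]
  simp [Tm.subst]

lemma orderly_rename [IsEmpty (F 0)] {t : Tm F} (ht : t.Orderly) {e : ℕ → ℕ}
    (he : StrictMono e) : (t.subst (fun i => Tm.var (e i))).Orderly := by
  apply orderly_subst ht (fun i => orderly_var (e i))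
  intro i j hij a ha b hb
  simp only [Tm.varList, List.mem_singleton] at ha hb
  subst ha; subst hb
  exact he hij

lemma mem_varList_rename {t : Tm F} {e : ℕ → ℕ} {j : ℕ} :
    j ∈ (t.subst (fun i => Tm.var (e i))).varList ↔ ∃ i ∈ t.varList, j = e i := by
  rw [mem_varList_subst]
  simp [Tm.varList, eq_comm]

/-- Central lemma: elements of `Gen 𝒜 c` are persistent and generate
subsets of `Gen 𝒜 c`. -/
lemma gen_shift [IsEmpty (F 0)] {𝒜 : Tm F → β} (h𝒜 : IsOrderlyAlg 𝒜) {c d : β}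
    (hc : Pers 𝒜 c) (hd : d ∈ Gen 𝒜 c) : Pers 𝒜 d ∧ Gen 𝒜 d ⊆ Gen 𝒜 c := by
  obtain ⟨τ, hτ, hvc⟩ := pers_admissible hc
  obtain ⟨s, hs, rfl⟩ := gen_elim h𝒜 hd hτ hvc
  set B := s.varList.foldr max 0 + 1 with hB
  have hiB : ∀ i ∈ s.varList, i < B := fun i hi => by
    have := le_foldr_max i hi; omega
  set r : ℕ → Tm F := fun k => s.subst (fun i => Tm.var (k * B + i)) with hr
  have hrmem : ∀ {k j}, j ∈ (r k).varList → ∃ i ∈ s.varList, j = k * B + i :=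
    fun {k j} h => mem_varList_rename.mp h
  have hrord : ∀ k, (r k).Orderly := fun k =>
    orderly_rename hs (fun a b hab => by omega)
  have hrallLT : ∀ {k l}, k < l → AllLT (r k) (r l) := by
    intro k l hkl a ha b hb
    obtain ⟨i, hi, rfl⟩ := hrmem ha
    obtain ⟨i', hi', rfl⟩ := hrmem hb
    have h1 := hiB i hi
    have : k * B + B ≤ l * B := by
      have : k + 1 ≤ l := hkl
      calc k * B + B = (k + 1) * B := by ring
        _ ≤ l * B := Nat.mul_le_mul_right B this
    omega
  set σ : ℕ → Tm F := fun k => (r k).subst τ with hσ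
  have hτallLT : ∀ i j : ℕ, i < j → AllLT (τ i) (τ j) := fun i j h => admissible_allLT hτ h
  have hσord : ∀ k, (σ k).Orderly := fun k => orderly_subst (hrord k) hτ.1 hτallLT
  have hσadm : Tm.Admissible σ :=
    ⟨hσord, fun k => termLT_of_allLT (allLT_subst (hrallLT (Nat.lt_succ_self k)) hτallLT)⟩
  have hσval : ∀ k, 𝒜 (σ k) = 𝒜 (s.subst τ) := by
    intro k
    have he : ∀ m, k * B + m < k * B + (m + 1) := fun m => by omega
    have hcomp : Tm.Admissible (fun i => τ (k * B + i)) := admissible_comp hτ he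
    rw [hσ]
    show 𝒜 ((s.subst fun i => Tm.var (k * B + i)).subst τ) = _
    rw [subst_var]
    exact key h𝒜 hcomp hτ s hs (fun i _ => by rw [hvc, hvc])
  constructor
  · -- persistence of d
    intro N
    refine ⟨σ N, hσord N, hσval N, ?_⟩
    intro j hj
    obtain ⟨m, hm, hjm⟩ := mem_varList_subst.mp hj
    obtain ⟨i, hi, rfl⟩ := hrmem hm
    have h1 := admissible_var_ge hτ (N * B + i) j hjm
    have h2 : N ≤ N * B := Nat.le_mul_of_pos_right N (by omega)
    omega
  · -- Gen d ⊆ Gen c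
    intro x hx
    obtain ⟨u, hu, rfl⟩ := gen_elim h𝒜 hx hσadm hσval
    have : u.subst σ = (u.subst r).subst τ := by
      rw [subst_subst]
    rw [this]
    exact gen_intro (orderly_subst hu hrord (fun i j h => hrallLT h)) hτ hvc

noncomputable def enum (I : Set ℕ) (hI : I.Infinite) : ℕ → ℕ
  | 0 => (hI.exists_gt 0).choose
  | k + 1 => (hI.exists_gt (enum I hI k)).choose

lemma enum_spec (I : Set ℕ) (hI : I.Infinite) :
    (∀ k, enum I hI k ∈ I) ∧ ∀ k, enum I hI k < enum I hI (k + 1) := by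
  constructor
  · intro k
    cases k with
    | zero => exact (hI.exists_gt 0).choose_spec.1
    | succ m => exact (hI.exists_gt (enum I hI m)).choose_spec.1
  · intro k
    exact (hI.exists_gt (enum I hI k)).choose_spec.2

/-- Every reduction's universe contains a generated subalgebra of a
persistent element. -/
lemma reduction_gen [IsEmpty (F 0)] {𝒜 ℬ : Tm F → β} (h𝒜 : IsOrderlyAlg 𝒜)
    (hfin : (OAUniv 𝒜).Finite) (hred : OAReduction ℬ 𝒜) :
    ∃ c, Pers 𝒜 c ∧ Gen 𝒜 c ⊆ OAUniv ℬ := by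
  obtain ⟨ρ, hρ, hB⟩ := hred
  have : Finite ↥(OAUniv 𝒜) := hfin.to_subtype
  have hmem : ∀ i, 𝒜 (ρ i) ∈ OAUniv 𝒜 := fun i => ⟨ρ i, hρ.1 i, rfl⟩
  obtain ⟨y, hy⟩ := Finite.exists_infinite_fiber (fun i => (⟨𝒜 (ρ i), hmem i⟩ : ↥(OAUniv 𝒜)))
  set I : Set ℕ := {i | 𝒜 (ρ i) = (y : β)} with hI
  have hIinf : I.Infinite := by
    rw [Set.infinite_coe_iff] at hy
    refine hy.mono ?_
    intro i hi
    simp only [Set.mem_preimage, Set.mem_singleton_iff] at hi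
    simpa [hI] using congrArg Subtype.val hi
  obtain ⟨hmemI, hlt⟩ := enum_spec I hIinf
  set e := enum I hIinf with he
  set τ : ℕ → Tm F := fun k => ρ (e k) with hτdef
  have hτ : Tm.Admissible τ := admissible_comp hρ hlt
  have hvy : ∀ k, 𝒜 (τ k) = (y : β) := fun k => hmemI k
  have hestrict : ∀ k l, k < l → e k < e l := by
    intro k l hkl
    induction l with
    | zero => omega
    | succ m ih =>
      rcases Nat.lt_or_ge k m with hm | hm
      · exact lt_trans (ih hm) (hlt m)
      · have : k = m := by omega
        subst this; exact hlt k
  have hke : ∀ k, k ≤ e k := by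
    intro k
    induction k with
    | zero => omega
    | succ m ih => have := hlt m; omega
  refine ⟨y, ?_, ?_⟩
  · intro N
    refine ⟨τ N, hτ.1 N, hvy N, ?_⟩
    intro i hi
    have h1 := admissible_var_ge hρ (e N) i hi
    have h2 := hke N
    omega
  · intro x hx
    obtain ⟨u, hu, rfl⟩ := gen_elim h𝒜 hx hτ hvy
    have hcomp : u.subst τ = (u.subst (fun i => Tm.var (e i))).subst ρ := by
      rw [subst_var]
    rw [hcomp, ← hB _ (orderly_rename hu (fun a b hab => hestrict a b hab))]
    exact ⟨_, orderly_rename hu (fun a b hab => hestrict a b hab), rfl⟩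

end WR12
namespace WR12

variable {F : ℕ → Type u} {β : Type w}

lemma exists_singleton_gen [IsEmpty (F 0)] {𝒜 : Tm F → β} (h𝒜 : IsOrderlyAlg 𝒜)
    (hfin : (OAUniv 𝒜).Finite) (hWR : WeaklyRamseyOA 𝒜) :
    ∃ a, Pers 𝒜 a ∧ Gen 𝒜 a = {a} := by
  classical
  set Star : Set β → Prop := fun Q => ∀ X ⊆ Q, ∃ c, Pers 𝒜 c ∧ Gen 𝒜 c ⊆ Q ∧
    (Gen 𝒜 c ⊆ X ∨ Gen 𝒜 c ∩ X = ∅) with hStarDef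
  have persSub : {c | Pers 𝒜 c} ⊆ OAUniv 𝒜 := fun c hc => pers_mem_univ hc
  suffices h : ∀ n (Q : Set β), Q.Finite → Q.ncard ≤ n → Star Q →
      ∃ a, Pers 𝒜 a ∧ Gen 𝒜 a = {a} by
    refine h ((OAUniv 𝒜).ncard) {c | Pers 𝒜 c} (hfin.subset persSub)
      (Set.ncard_le_ncard persSub hfin) ?_
    intro X hX
    obtain ⟨ℬ, hred, hhom⟩ := hWR X (hX.trans persSub)
    obtain ⟨c, hc, hsub⟩ := reduction_gen h𝒜 hfin hred
    refine ⟨c, hc, fun z hz => (gen_shift h𝒜 hc hz).1, ?_⟩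
    rcases hhom with h1 | h1
    · exact Or.inl (hsub.trans h1)
    · refine Or.inr (Set.eq_empty_of_subset_empty ?_)
      rw [← h1]
      exact Set.inter_subset_inter_left _ hsub
  intro n
  induction n using Nat.strong_induction_on with
  | _ n ih =>
  intro Q hQfin hQcard hStar
  -- a minimal generated subalgebra inside Q
  have hex : ∃ m, ∃ c, Pers 𝒜 c ∧ Gen 𝒜 c ⊆ Q ∧ (Gen 𝒜 c).ncard = m := by
    obtain ⟨c, hc, hcQ, -⟩ := hStar ∅ (Set.empty_subset Q)
    exact ⟨(Gen 𝒜 c).ncard, c, hc, hcQ, rfl⟩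
  obtain ⟨a, hpa, haQ, ham⟩ := Nat.find_spec hex
  have hmin : ∀ c, Pers 𝒜 c → Gen 𝒜 c ⊆ Q → Nat.find hex ≤ (Gen 𝒜 c).ncard :=
    fun c h1 h2 => Nat.find_min' hex ⟨c, h1, h2, rfl⟩
  have haGa : a ∈ Gen 𝒜 a := gen_self hpa
  have hGaFin : (Gen 𝒜 a).Finite := hQfin.subset haQ
  by_cases hsing : Gen 𝒜 a = {a}
  · exact ⟨a, hpa, hsing⟩
  -- otherwise pick b ≠ a in Gen a
  have hb : ∃ b ∈ Gen 𝒜 a, b ≠ a := by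
    by_contra hcon
    push_neg at hcon
    exact hsing (Set.eq_singleton_iff_unique_mem.mpr ⟨haGa, hcon⟩)
  obtain ⟨b, hbGa, hbne⟩ := hb
  set Q' : Set β := {x ∈ Q | Gen 𝒜 x ∩ Gen 𝒜 a = ∅} with hQ'def
  have hQ'sub : Q' ⊆ Q := fun x hx => hx.1
  have haQmem : a ∈ Q := haQ haGa
  have haQ' : a ∉ Q' := by
    intro hx
    have := hx.2
    rw [Set.eq_empty_iff_forall_notMem] at this
    exact this a ⟨haGa, haGa⟩
  have hQ'ssub : Q' ⊂ Q := ⟨hQ'sub, fun h => haQ' (h haQmem)⟩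
  have hStarQ' : Star Q' := by
    intro X' hX'
    have hXsub : X' ∪ {a} ⊆ Q :=
      Set.union_subset (hX'.trans hQ'sub) (Set.singleton_subset_iff.mpr haQmem)
    obtain ⟨c, hpc, hcQ, hhom⟩ := hStar (X' ∪ {a}) hXsub
    -- Gen c is disjoint from Gen a
    have hdisj : Gen 𝒜 c ∩ Gen 𝒜 a = ∅ := by
      by_contra hne
      obtain ⟨y, hy1, hy2⟩ := Set.nonempty_iff_ne_empty.mpr hne
      have hpy := (gen_shift h𝒜 hpa hy2).1
      have hysub : Gen 𝒜 y ⊆ Gen 𝒜 a := (gen_shift h𝒜 hpa hy2).2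
      have hyQ : Gen 𝒜 y ⊆ Q := hysub.trans haQ
      have hle : (Gen 𝒜 a).ncard ≤ (Gen 𝒜 y).ncard := by
        rw [ham]; exact hmin y hpy hyQ
      have heq : Gen 𝒜 y = Gen 𝒜 a :=
        Set.eq_of_subset_of_ncard_le hysub hle hGaFin
      have hGasub : Gen 𝒜 a ⊆ Gen 𝒜 c := by
        rw [← heq]; exact (gen_shift h𝒜 hpc hy1).2
      rcases hhom with h1 | h1
      · have hbX : b ∈ X' ∪ {a} := h1 (hGasub hbGa)
        have hbX' : b ∈ X' := by
          rcases hbX with h | h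
          · exact h
          · exact absurd h hbne
        have hbQ' : b ∈ Q' := hX' hbX'
        have hpb := (gen_shift h𝒜 hpa hbGa).1
        have : b ∈ Gen 𝒜 b ∩ Gen 𝒜 a := ⟨gen_self hpb, hbGa⟩
        rw [hbQ'.2] at this
        exact this
      · have : a ∈ Gen 𝒜 c ∩ (X' ∪ {a}) := ⟨hGasub haGa, Or.inr rfl⟩
        rw [h1] at this
        exact this
    have haGc : a ∉ Gen 𝒜 c := by
      intro h
      rw [Set.eq_empty_iff_forall_notMem] at hdisj
      exact hdisj a ⟨h, haGa⟩
    refine ⟨c, hpc, ?_, ?_⟩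
    · intro z hz
      refine ⟨hcQ hz, ?_⟩
      have hzsub : Gen 𝒜 z ⊆ Gen 𝒜 c := (gen_shift h𝒜 hpc hz).2
      rw [Set.eq_empty_iff_forall_notMem]
      rintro w ⟨hw1, hw2⟩
      rw [Set.eq_empty_iff_forall_notMem] at hdisj
      exact hdisj w ⟨hzsub hw1, hw2⟩
    · rcases hhom with h1 | h1
      · refine Or.inl (fun z hz => ?_)
        rcases h1 hz with h | h
        · exact h
        · exact absurd (h ▸ hz) haGc
      · refine Or.inr (Set.eq_empty_of_subset_empty ?_)
        rw [← h1]
        exact Set.inter_subset_inter_right _ Set.subset_union_left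
  have hlt : Q'.ncard < n :=
    lt_of_lt_of_le (Set.ncard_lt_ncard hQ'ssub hQfin) hQcard
  exact ih Q'.ncard hlt Q' (hQfin.subset hQ'sub) le_rfl hStarQ'

end WR12
/-- An orderly algebra with finite universe is weakly Ramsey
iff it has a reduction that is a trivial orderly algebra (constant on orderly
terms). -/
theorem finite_universe_weakly_ramsey_iff {F : ℕ → Type u} [IsEmpty (F 0)]
    {β : Type w} (𝒜 : Tm F → β) (h𝒜 : IsOrderlyAlg 𝒜)
    (hfin : (OAUniv 𝒜).Finite) :
    WeaklyRamseyOA 𝒜 ↔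
      ∃ ℬ, OAReduction ℬ 𝒜 ∧ ∃ c : β, ∀ t : Tm F, t.Orderly → ℬ t = c := by
  constructor
  · intro hWR
    obtain ⟨a, hpa, hgen⟩ := WR12.exists_singleton_gen h𝒜 hfin hWR
    obtain ⟨τ, hτ, hvc⟩ := WR12.pers_admissible hpa
    refine ⟨fun s => 𝒜 (s.subst τ), ⟨τ, hτ, fun s _ => rfl⟩, a, ?_⟩
    intro t ht
    have : 𝒜 (t.subst τ) ∈ WR12.Gen 𝒜 a := WR12.gen_intro ht hτ hvc
    rw [hgen] at this
    exact this
  · rintro ⟨ℬ, hred, c, hconst⟩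
    intro X hX
    refine ⟨ℬ, hred, ?_⟩
    have hBuniv : OAUniv ℬ ⊆ {c} := by
      rintro y ⟨t, ht, rfl⟩
      exact hconst t ht
    by_cases hc : c ∈ X
    · exact Or.inl (hBuniv.trans (Set.singleton_subset_iff.mpr hc))
    · refine Or.inr (Set.eq_empty_iff_forall_notMem.mpr ?_)
      rintro y ⟨hy1, hy2⟩
      have : y = c := hBuniv hy1
      exact hc (this ▸ hy2)
end

section
/- Let L be a first-order language all of whose symbols are function symbols of arity ≥ 1, containing at least one binary function symbol, and let 𝒜 be an orderly L-algebra. Then 𝒜 is weakly Ramsey if and only if for every X ⊆ ‖𝒜‖ there exists a reduction ℬ of 𝒜 that is pre-homogeneous for X, meaning: for all orderly terms t₁ and t₂ in which exactly the same variables occur, ℬ(t₁) ∈ X if and only if ℬ(t₂) ∈ X. -/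
open Function Set

universe u v w

namespace WRPH

open Tm List

variable {F : ℕ → Type u}

@[simp] theorem varList_func {n : ℕ} (f : F n) (ts : Fin n → Tm F) :
    (Tm.func f ts).varList = (List.finRange n).flatMap fun i => (ts i).varList := rfl

theorem varList_ne_nil [IsEmpty (F 0)] (t : Tm F) : t.varList ≠ [] := by
  induction t with
  | var i => simp [Tm.varList]
  | func f ts ih =>
    rename_i n
    cases n with
    | zero => exact isEmptyElim f
    | succ n =>
      obtain ⟨x, hx⟩ := List.exists_mem_of_ne_nil _ (ih 0)
      exact List.ne_nil_of_mem (List.mem_flatMap.2 ⟨0, List.mem_finRange 0, hx⟩)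

/-- index of first variable -/
def fv (t : Tm F) : ℕ := t.varList.head?.getD 0

/-- index of last variable -/
def lv (t : Tm F) : ℕ := t.varList.getLast?.getD 0

theorem head?_varList (t : Tm F) (h : t.varList ≠ []) : t.varList.head? = some (fv t) := by
  cases hl : t.varList with
  | nil => exact absurd hl h
  | cons a l => simp [fv, hl]

theorem getLast?_varList (t : Tm F) (h : t.varList ≠ []) :
    t.varList.getLast? = some (lv t) := by
  cases hl : t.varList.getLast? with
  | none => exact absurd (List.getLast?_eq_none_iff.1 hl) h
  | some a => simp [lv, hl]

theorem termLT_iff {s t : Tm F} (hs : s.varList ≠ []) (ht : t.varList ≠ []) :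
    Tm.TermLT s t ↔ lv s < fv t := by
  constructor
  · rintro ⟨i, j, hi, hj, hij⟩
    rw [getLast?_varList s hs] at hi
    rw [head?_varList t ht] at hj
    have h1 : lv s = i := by injection hi
    have h2 : fv t = j := by injection hj
    omega
  · intro h
    exact ⟨lv s, fv t, getLast?_varList s hs, head?_varList t ht, h⟩

theorem head_le_getLast {l : List ℕ} (hl : l.Chain' (· < ·)) (h : l ≠ []) :
    l.head?.getD 0 ≤ l.getLast?.getD 0 := by
  induction l with
  | nil => simp at h
  | cons a l ih =>
    cases l with
    | nil => simp
    | cons b r =>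
      have hab : a < b := List.isChain_cons_cons.1 hl |>.1
      have := ih (List.isChain_cons_cons.1 hl).2 (by simp)
      simp only [List.head?_cons, Option.getD_some, List.getLast?_cons_cons] at this ⊢
      omega

theorem fv_le_lv [IsEmpty (F 0)] {t : Tm F} (ht : t.Orderly) : fv t ≤ lv t :=
  head_le_getLast ht (varList_ne_nil t)

theorem admissible_lt [IsEmpty (F 0)] {ts : ℕ → Tm F} (h : Tm.Admissible ts) :
    ∀ i j : ℕ, i < j → lv (ts i) < fv (ts j) := by
  intro i j hij
  induction j with
  | zero => omega
  | succ j ih =>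
    have hstep : lv (ts j) < fv (ts (j + 1)) :=
      (termLT_iff (varList_ne_nil _) (varList_ne_nil _)).1 (h.2 j)
    rcases Nat.lt_or_ge i j with hij' | hij'
    · exact lt_of_le_of_lt (le_trans (le_of_lt (ih hij')) (fv_le_lv (h.1 j))) hstep
    · have : i = j := by omega
      subst this
      exact hstep

theorem flatMap_ne_nil {l : List ℕ} {g : ℕ → List ℕ} (hl : l ≠ [])
    (hg : ∀ i, g i ≠ []) : l.flatMap g ≠ [] := by
  cases l with
  | nil => exact absurd rfl hl
  | cons a r =>
    obtain ⟨x, hx⟩ := List.exists_mem_of_ne_nil _ (hg a)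
    exact List.ne_nil_of_mem (List.mem_flatMap.2 ⟨a, by simp, hx⟩)

theorem head?_flatMap {l : List ℕ} {g : ℕ → List ℕ} (hl : l ≠ [])
    (hg : ∀ i, g i ≠ []) :
    (l.flatMap g).head? = (g (l.head?.getD 0)).head? := by
  cases l with
  | nil => exact absurd rfl hl
  | cons a r =>
    simp only [List.flatMap_cons, List.head?_cons, Option.getD_some]
    exact List.head?_append_of_ne_nil _ (hg a)

theorem getLast?_flatMap {l : List ℕ} {g : ℕ → List ℕ} (hl : l ≠ [])
    (hg : ∀ i, g i ≠ []) :
    (l.flatMap g).getLast? = (g (l.getLast?.getD 0)).getLast? := by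
  induction l with
  | nil => exact absurd rfl hl
  | cons a r ih =>
    cases r with
    | nil => simp
    | cons b r' =>
      have hne : (b :: r').flatMap g ≠ [] := flatMap_ne_nil (by simp) hg
      simp only [List.flatMap_cons] at hne ⊢
      rw [List.getLast?_append_of_ne_nil _ hne, List.getLast?_cons_cons]
      exact ih (by simp) 

theorem chain'_flatMap {l : List ℕ} {g : ℕ → List ℕ}
    (hg : ∀ i, g i ≠ []) (hc : ∀ i, (g i).Chain' (· < ·))
    (hlt : ∀ i j : ℕ, i < j → (g i).getLast?.getD 0 < (g j).head?.getD 0)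
    (hl : l.Chain' (· < ·)) : (l.flatMap g).Chain' (· < ·) := by
  induction l with
  | nil => exact List.isChain_nil
  | cons a r ih =>
    rw [List.flatMap_cons]
    unfold List.Chain'
    rw [List.isChain_append]
    refine ⟨hc a, ih hl.tail, ?_⟩
    intro x hx y hy
    cases r with
    | nil => simp at hy
    | cons b r' =>
      have hab : a < b := List.isChain_cons_cons.1 hl |>.1
      rw [head?_flatMap (by simp) hg] at hy
      have h1 : (g a).getLast?.getD 0 < (g b).head?.getD 0 := hlt a b hab
      have hx' : (g a).getLast?.getD 0 = x := by
        cases hgl : (g a).getLast? with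
        | none => exact absurd hgl (by simp [List.getLast?_eq_none_iff, hg a])
        | some z => rw [hgl] at hx; simp_all
      have hy' : (g b).head?.getD 0 = y := by
        simp only [List.head?_cons, Option.getD_some] at hy
        cases hgh : (g b).head? with
        | none => exact absurd hgh (by simp [List.head?_eq_none_iff, hg b])
        | some z =>
          rw [hgh] at hy
          simp only [Option.mem_def, Option.some.injEq] at hy
          simp [hy]
      omega

theorem varList_subst (σ : ℕ → Tm F) (t : Tm F) :
    (t.subst σ).varList = t.varList.flatMap fun i => (σ i).varList := by
  induction t with
  | var i => simp [Tm.subst, Tm.varList]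
  | func f ts ih =>
    show (Tm.func f fun i => (ts i).subst σ).varList = _
    simp only [varList_func, List.flatMap_assoc]
    congr 1
    funext i
    exact ih i

theorem orderly_subst [IsEmpty (F 0)] {s : Tm F} {ts : ℕ → Tm F}
    (hs : s.Orderly) (hts : Tm.Admissible ts) : (s.subst ts).Orderly := by
  unfold Tm.Orderly
  rw [varList_subst]
  exact chain'_flatMap (fun i => varList_ne_nil _) (fun i => hts.1 i)
    (fun i j hij => admissible_lt hts i j hij) hs

theorem fv_subst [IsEmpty (F 0)] (s : Tm F) (ts : ℕ → Tm F) :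
    fv (s.subst ts) = fv (ts (fv s)) := by
  unfold fv
  rw [varList_subst, head?_flatMap (varList_ne_nil s) (fun i => varList_ne_nil _)]

theorem lv_subst [IsEmpty (F 0)] (s : Tm F) (ts : ℕ → Tm F) :
    lv (s.subst ts) = lv (ts (lv s)) := by
  unfold lv
  rw [varList_subst, getLast?_flatMap (varList_ne_nil s) (fun i => varList_ne_nil _)]

theorem subst_subst (σ τ : ℕ → Tm F) (t : Tm F) :
    (t.subst σ).subst τ = t.subst fun i => (σ i).subst τ := by
  induction t with
  | var i => rfl
  | func f ts ih =>
    show Tm.func f (fun i => ((ts i).subst σ).subst τ) = Tm.func f _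
    congr 1
    funext i
    exact ih i

theorem admissible_comp [IsEmpty (F 0)] {ts us : ℕ → Tm F}
    (hts : Tm.Admissible ts) (hus : Tm.Admissible us) :
    Tm.Admissible (fun i => (ts i).subst us) := by
  constructor
  · exact fun i => orderly_subst (hts.1 i) hus
  · intro i
    rw [termLT_iff (varList_ne_nil _) (varList_ne_nil _), lv_subst, fv_subst]
    have h1 : lv (ts i) < fv (ts (i + 1)) :=
      (termLT_iff (varList_ne_nil _) (varList_ne_nil _)).1 (hts.2 i)
    exact admissible_lt hus _ _ h1

section Build

variable {F : ℕ → Type u} (f2 : F 2)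

theorem varList_fapp (a b : Tm F) :
    (Tm.func f2 ![a, b]).varList = a.varList ++ b.varList := by
  rw [varList_func]
  have : List.finRange 2 = [0, 1] := by decide
  rw [this]
  simp

/-- fold a list of variables onto a seed term using the binary symbol -/
def mkT (t : Tm F) (l : List ℕ) : Tm F :=
  l.foldl (fun acc j => Tm.func f2 ![acc, Tm.var j]) t

theorem varList_mkT (t : Tm F) (l : List ℕ) :
    (mkT f2 t l).varList = t.varList ++ l := by
  induction l generalizing t with
  | nil => simp [mkT]
  | cons j l ih =>
    show (mkT f2 (Tm.func f2 ![t, Tm.var j]) l).varList = _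
    rw [ih, varList_fapp]
    simp [Tm.varList]

/-- the canonical orderly term whose variable list is a given (sorted) list -/
def tmOf (l : List ℕ) : Tm F :=
  match l with
  | [] => Tm.var 0
  | a :: r => mkT f2 (Tm.var a) r

theorem varList_tmOf {l : List ℕ} (h : l ≠ []) : (tmOf f2 l).varList = l := by
  cases l with
  | nil => exact absurd rfl h
  | cons a r =>
    show (mkT f2 (Tm.var a) r).varList = _
    rw [varList_mkT]
    simp [Tm.varList]

/-- the canonical orderly term whose variable set is a given finset -/
def tmOfS (S : Finset ℕ) : Tm F := tmOf f2 (S.sort (· ≤ ·))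

theorem sort_ne_nil {S : Finset ℕ} (h : S.Nonempty) : S.sort (· ≤ ·) ≠ [] := by
  obtain ⟨x, hx⟩ := h
  exact List.ne_nil_of_mem ((Finset.mem_sort _).2 hx)

theorem varList_tmOfS {S : Finset ℕ} (h : S.Nonempty) :
    (tmOfS f2 S).varList = S.sort (· ≤ ·) :=
  varList_tmOf f2 (sort_ne_nil h)

theorem orderly_tmOfS {S : Finset ℕ} (h : S.Nonempty) : (tmOfS f2 S).Orderly := by
  unfold Tm.Orderly
  rw [varList_tmOfS f2 h]
  exact (Finset.sortedLT_sort S).isChain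

theorem mem_varList_tmOfS {S : Finset ℕ} (h : S.Nonempty) (i : ℕ) :
    i ∈ (tmOfS f2 S).varList ↔ i ∈ S := by
  rw [varList_tmOfS f2 h, Finset.mem_sort]

end Build

section Supp

/-- the binary support of a natural number -/
def supp (x : ℕ) : Finset ℕ := (Finset.range (x + 1)).filter fun i => x.testBit i

theorem mem_supp {x i : ℕ} : i ∈ supp x ↔ x.testBit i = true := by
  unfold supp
  rw [Finset.mem_filter, Finset.mem_range]
  constructor
  · exact fun h => h.2
  · intro h
    refine ⟨?_, h⟩
    have h1 : 2 ^ i ≤ x := Nat.ge_two_pow_of_testBit h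
    have h2 : i < 2 ^ i := Nat.lt_two_pow_self
    omega

@[simp] theorem supp_zero : supp 0 = ∅ := by
  ext i; simp [mem_supp]

theorem supp_nonempty {x : ℕ} (h : 0 < x) : (supp x).Nonempty := by
  by_contra hc
  rw [Finset.not_nonempty_iff_eq_empty] at hc
  have : x = 0 := Nat.zero_of_testBit_eq_false fun i => by
    by_contra hb
    have : i ∈ supp x := mem_supp.2 (by simpa using hb)
    simp [hc] at this
  omega

theorem testBit_false_of_dvd {x k i : ℕ} (h : 2 ^ k ∣ x) (hi : i < k) :
    x.testBit i = false := by
  obtain ⟨q, rfl⟩ := h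
  have := Nat.testBit_two_pow_mul_add q (Nat.two_pow_pos k : (0:ℕ) < 2 ^ k) i
  simpa [hi] using this

theorem supp_add {a b k : ℕ} (ha : a < 2 ^ k) (hb : 2 ^ k ∣ b) :
    supp (a + b) = supp a ∪ supp b := by
  obtain ⟨q, rfl⟩ := hb
  ext i
  simp only [Finset.mem_union, mem_supp]
  rw [show a + 2 ^ k * q = 2 ^ k * q + a by omega, Nat.testBit_two_pow_mul_add q ha i]
  rcases lt_or_ge i k with hik | hik
  · have hf : (2 ^ k * q).testBit i = false := testBit_false_of_dvd ⟨q, rfl⟩ hik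
    simp [hik, hf]
  · have hf : a.testBit i = false :=
      Nat.testBit_lt_two_pow (lt_of_lt_of_le ha (Nat.pow_le_pow_right (by norm_num) hik))
    have : (2 ^ k * q).testBit i = q.testBit (i - k) := by
      have := Nat.testBit_two_pow_mul_add q (Nat.two_pow_pos k : (0:ℕ) < 2 ^ k) i
      simpa [Nat.not_lt.2 hik, Nat.lt_irrefl] using this
    simp [Nat.not_lt.2 hik, hf, this]

theorem supp_subset_of_dvd_of_lt {x k k' : ℕ} (h : 2 ^ k ∣ x) (h' : x < 2 ^ k') :
    ∀ i ∈ supp x, k ≤ i ∧ i < k' := by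
  intro i hi
  rw [mem_supp] at hi
  constructor
  · by_contra hc
    rw [testBit_false_of_dvd h (by omega)] at hi
    simp at hi
  · by_contra hc
    have h1 : 2 ^ i ≤ x := Nat.ge_two_pow_of_testBit hi
    have h2 : (2:ℕ) ^ k' ≤ 2 ^ i := Nat.pow_le_pow_right (by norm_num) (by omega)
    omega

theorem supp_sum_blocks {D : ℕ → ℕ} {c : ℕ → ℕ}
    (hdvd : ∀ n, 2 ^ c n ∣ D n) (hub : ∀ n, D n < 2 ^ c (n + 1))
    (hmono : Monotone c) :
    ∀ KK : Finset ℕ, supp (∑ n ∈ KK, D n) = KK.biUnion fun n => supp (D n) := by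
  intro KK
  induction KK using Finset.strongInduction with
  | _ KK ih =>
    rcases KK.eq_empty_or_nonempty with rfl | hne
    · simp
    · set n₀ := KK.min' hne with hn₀
      have hmem : n₀ ∈ KK := KK.min'_mem hne
      have hKK : KK = insert n₀ (KK.erase n₀) := (Finset.insert_erase hmem).symm
      have hdvd' : 2 ^ c (n₀ + 1) ∣ ∑ n ∈ KK.erase n₀, D n := by
        refine Finset.dvd_sum fun m hm => ?_
        have hmlt : n₀ < m := Finset.min'_lt_of_mem_erase_min' _ _ hm
        exact dvd_trans (pow_dvd_pow 2 (hmono (by omega))) (hdvd m)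
      rw [hKK, Finset.sum_insert (Finset.notMem_erase _ _),
        supp_add (hub n₀) hdvd', Finset.biUnion_insert,
        ih (KK.erase n₀) (Finset.erase_ssubset hmem)]

end Supp

section Blocks

/-- pigeonhole: one can find a block of indices starting beyond `k` whose sum
is divisible by `2 ^ m`. -/
theorem exists_block (b : Stream' ℕ) (k m : ℕ) :
    ∃ p : Finset ℕ × ℕ, p.1.Nonempty ∧ k < p.2 ∧ (∀ i ∈ p.1, k ≤ i ∧ i < p.2) ∧
      2 ^ m ∣ ∑ i ∈ p.1, b.get i := by
  set f : ℕ → ℕ := fun j => (∑ i ∈ Finset.range j, b.get (k + i)) % 2 ^ m with hf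
  have hmaps : ∀ j ∈ Finset.range (2 ^ m + 1), f j ∈ Finset.range (2 ^ m) := by
    intro j _
    exact Finset.mem_range.2 (Nat.mod_lt _ (Nat.two_pow_pos m))
  obtain ⟨j, hj, j', hj', hne, heq⟩ :=
    Finset.exists_ne_map_eq_of_card_lt_of_maps_to (by simp) hmaps
  wlog hlt : j < j' generalizing j j'
  · exact this j' hj' j hj (Ne.symm hne) heq.symm (by omega)
  refine ⟨⟨(Finset.Ico j j').image (k + ·), k + j'⟩, ?_, by omega, ?_, ?_⟩
  · exact (Finset.nonempty_Ico.2 hlt).image _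
  · intro i hi
    simp only [Finset.mem_image, Finset.mem_Ico] at hi
    obtain ⟨x, hx, rfl⟩ := hi
    omega
  · rw [Finset.sum_image (by intro x _ y _ h; simp only at h; omega)]
    have hsub : ∑ i ∈ Finset.range j, b.get (k + i) ≤
        ∑ i ∈ Finset.range j', b.get (k + i) :=
      Finset.sum_le_sum_of_subset (Finset.range_subset_range.2 (by omega))
    have hmod : (∑ i ∈ Finset.range j, b.get (k + i)) ≡
        (∑ i ∈ Finset.range j', b.get (k + i)) [MOD 2 ^ m] := heq
    have hdvd := (Nat.modEq_iff_dvd' hsub).1 hmod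
    have hsplit : ∑ i ∈ Finset.range j, b.get (k + i) +
        ∑ i ∈ Finset.Ico j j', b.get (k + i) = ∑ i ∈ Finset.range j', b.get (k + i) :=
      Finset.sum_range_add_sum_Ico (fun i => b.get (k + i)) (le_of_lt hlt)
    have : ∑ i ∈ Finset.Ico j j', b.get (k + i) =
        ∑ i ∈ Finset.range j', b.get (k + i) - ∑ i ∈ Finset.range j, b.get (k + i) := by
      omega
    rw [this]
    exact hdvd

/-- an infinite sequence of blocks with controlled binary supports -/
theorem exists_blocks (b : Stream' ℕ) :
    ∃ (K : ℕ → Finset ℕ) (c : ℕ → ℕ) (k : ℕ → ℕ),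
      (∀ n, (K n).Nonempty) ∧
      (∀ n, ∀ i ∈ K n, k n ≤ i ∧ i < k (n + 1)) ∧
      (∀ n, 2 ^ c n ∣ ∑ i ∈ K n, b.get i) ∧
      (∀ n, (∑ i ∈ K n, b.get i) < 2 ^ c (n + 1)) ∧
      (∀ n, c n < c (n + 1)) := by
  classical
  choose P hne hlt hmem hdvd using exists_block b
  set D : Finset ℕ → ℕ := fun K => ∑ i ∈ K, b.get i with hD
  set st : ℕ → ℕ × ℕ := fun n =>
    Nat.rec (0, 0) (fun _ p => ((P p.1 p.2).2, max (p.2 + 1) (D (P p.1 p.2).1))) n with hst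
  refine ⟨fun n => (P (st n).1 (st n).2).1, fun n => (st n).2, fun n => (st n).1,
    fun n => hne _ _, fun n => ?_, fun n => hdvd _ _, fun n => ?_, fun n => ?_⟩
  · beta_reduce
    have h1 : (st (n + 1)).1 = (P (st n).1 (st n).2).2 := rfl
    rw [h1]
    exact hmem _ _
  · beta_reduce
    have h2 : (st (n + 1)).2 = max ((st n).2 + 1) (D (P (st n).1 (st n).2).1) := rfl
    rw [h2]
    calc D (P (st n).1 (st n).2).1 < 2 ^ D (P (st n).1 (st n).2).1 := Nat.lt_two_pow_self
    _ ≤ 2 ^ max ((st n).2 + 1) (D (P (st n).1 (st n).2).1) :=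
        Nat.pow_le_pow_right (by norm_num) (le_max_right _ _)
  · beta_reduce
    have h2 : (st (n + 1)).2 = max ((st n).2 + 1) (D (P (st n).1 (st n).2).1) := rfl
    rw [h2]
    omega

theorem FS_pos : ∀ {a : Stream' ℕ} {x : ℕ}, x ∈ Hindman.FS a →
    (∀ n, 0 < a.get n) → 0 < x := by
  intro a x hx
  induction hx with
  | head' a => exact fun ha => ha 0
  | tail' a m h ih => exact fun ha => ih fun n => by rw [Stream'.get_tail]; exact ha (n + 1)
  | cons' a m h ih =>
    intro ha
    have := ha 0
    have hh : a.head = a.get 0 := rfl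
    omega

end Blocks

end WRPH
/-- For a language containing a binary function symbol, an
orderly algebra is weakly Ramsey iff for every `X ⊆ ‖𝒜‖` some reduction of
`𝒜` is pre-homogeneous for `X`. -/
theorem weakly_ramsey_iff_prehomogeneous {F : ℕ → Type u} [IsEmpty (F 0)]
    [Nonempty (F 2)] {β : Type w} (𝒜 : Tm F → β) (h𝒜 : IsOrderlyAlg 𝒜) :
    WeaklyRamseyOA 𝒜 ↔
      ∀ X ⊆ OAUniv 𝒜, ∃ ℬ, OAReduction ℬ 𝒜 ∧
        ∀ t₁ t₂ : Tm F, t₁.Orderly → t₂.Orderly →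
          (∀ i, i ∈ t₁.varList ↔ i ∈ t₂.varList) → (ℬ t₁ ∈ X ↔ ℬ t₂ ∈ X) := by
  constructor
  · intro hWR X hX
    obtain ⟨ℬ, hred, hhom⟩ := hWR X hX
    refine ⟨ℬ, hred, fun t₁ t₂ h₁ h₂ _ => ?_⟩
    have m1 : ℬ t₁ ∈ OAUniv ℬ := ⟨t₁, h₁, rfl⟩
    have m2 : ℬ t₂ ∈ OAUniv ℬ := ⟨t₂, h₂, rfl⟩
    cases hhom with
    | inl h => simp [h m1, h m2]
    | inr h =>
      have n1 : ℬ t₁ ∉ X := fun hx => Set.eq_empty_iff_forall_notMem.1 h _ ⟨m1, hx⟩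
      have n2 : ℬ t₂ ∉ X := fun hx => Set.eq_empty_iff_forall_notMem.1 h _ ⟨m2, hx⟩
      simp [n1, n2]
  · intro H X hX
    classical
    obtain ⟨f2⟩ := ‹Nonempty (F 2)›
    obtain ⟨ℬ, ⟨us, hus, husB⟩, hpre⟩ := H X hX
    set a : Stream' ℕ := fun _ => 1 with ha
    set C₁ : Set ℕ := {x | 0 < x ∧ ℬ (WRPH.tmOfS f2 (WRPH.supp x)) ∈ X} with hC₁
    set C₂ : Set ℕ := {x | 0 < x ∧ ℬ (WRPH.tmOfS f2 (WRPH.supp x)) ∉ X} with hC₂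
    have hcov : Hindman.FS a ⊆ ⋃₀ {C₁, C₂} := by
      intro x hx
      have hxpos : 0 < x := WRPH.FS_pos hx fun n => Nat.one_pos
      by_cases hmem : ℬ (WRPH.tmOfS f2 (WRPH.supp x)) ∈ X
      · exact ⟨C₁, by simp, hxpos, hmem⟩
      · exact ⟨C₂, by simp, hxpos, hmem⟩
    obtain ⟨cell, hcell, b, hFSb⟩ := Hindman.FS_partition_regular a {C₁, C₂}
      (Set.Finite.insert _ (Set.finite_singleton _)) hcov
    obtain ⟨v, hv⟩ : ∃ v : Prop, ∀ x ∈ Hindman.FS b,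
        0 < x ∧ ((ℬ (WRPH.tmOfS f2 (WRPH.supp x)) ∈ X) ↔ v) := by
      simp only [Set.mem_insert_iff, Set.mem_singleton_iff] at hcell
      rcases hcell with rfl | rfl
      · exact ⟨True, fun x hx => ⟨(hFSb hx).1, by simp [(hFSb hx).2]⟩⟩
      · exact ⟨False, fun x hx => ⟨(hFSb hx).1, by simp [(hFSb hx).2]⟩⟩
    obtain ⟨K, c, k, hKne, hKmem, hKdvd, hKub, hcsucc⟩ := WRPH.exists_blocks b
    set D : ℕ → ℕ := fun n => ∑ i ∈ K n, b.get i with hD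
    have hDFS : ∀ n, D n ∈ Hindman.FS b := fun n => Hindman.FS.finset_sum b (K n) (hKne n)
    have hcmono : Monotone c := monotone_nat_of_le_succ fun n => le_of_lt (hcsucc n)
    have hkmono : Monotone k := monotone_nat_of_le_succ fun n => by
      obtain ⟨i, hi⟩ := hKne n
      have := hKmem n i hi
      omega
    have hsuppD : ∀ n, ∀ i ∈ WRPH.supp (D n), c n ≤ i ∧ i < c (n + 1) := fun n =>
      WRPH.supp_subset_of_dvd_of_lt (hKdvd n) (hKub n)
    have hSne : ∀ n, (WRPH.supp (D n)).Nonempty := fun n =>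
      WRPH.supp_nonempty (hv _ (hDFS n)).1
    set ts : ℕ → Tm F := fun n => WRPH.tmOfS f2 (WRPH.supp (D n)) with hts
    have htsvl : ∀ n, (ts n).varList ≠ [] := fun n => WRPH.varList_ne_nil _
    have htsadm : Tm.Admissible ts := by
      constructor
      · exact fun n => WRPH.orderly_tmOfS f2 (hSne n)
      · intro n
        rw [WRPH.termLT_iff (htsvl n) (htsvl (n + 1))]
        have hl : WRPH.lv (ts n) ∈ WRPH.supp (D n) := by
          rw [← WRPH.mem_varList_tmOfS f2 (hSne n)]
          exact List.mem_of_mem_getLast? (by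
            rw [WRPH.getLast?_varList _ (htsvl n)]; rfl)
        have hf : WRPH.fv (ts (n + 1)) ∈ WRPH.supp (D (n + 1)) := by
          rw [← WRPH.mem_varList_tmOfS f2 (hSne (n + 1))]
          exact List.mem_of_mem_head? (by
            rw [WRPH.head?_varList _ (htsvl (n + 1))]; rfl)
        have h1 := hsuppD n _ hl
        have h2 := hsuppD (n + 1) _ hf
        omega
    -- the candidate homogeneous reduction
    set 𝒞 : Tm F → β := fun s => ℬ (s.subst ts) with h𝒞
    have hredC : OAReduction 𝒞 𝒜 := by
      refine ⟨fun i => (ts i).subst us, WRPH.admissible_comp htsadm hus, fun s hs => ?_⟩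
      rw [← WRPH.subst_subst]
      exact husB _ (WRPH.orderly_subst hs htsadm)
    have hval : ∀ s : Tm F, s.Orderly → (𝒞 s ∈ X ↔ v) := by
      intro s hs
      set V : Finset ℕ := s.varList.toFinset with hV
      have hVne : V.Nonempty := by
        obtain ⟨x, hx⟩ := List.exists_mem_of_ne_nil _ (WRPH.varList_ne_nil s)
        exact ⟨x, List.mem_toFinset.2 hx⟩
      have hdisj : (↑V : Set ℕ).PairwiseDisjoint K := by
        intro x hx y hy hxy
        rw [Function.onFun, Finset.disjoint_left]
        intro i hix hiy
        have h1 := hKmem x i hix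
        have h2 := hKmem y i hiy
        rcases Nat.lt_or_ge x y with h | h
        · have := hkmono (show x + 1 ≤ y by omega)
          omega
        · have hyx : y < x := by omega
          have := hkmono (show y + 1 ≤ x by omega)
          omega
      set DV : ℕ := ∑ n ∈ V, D n with hDV
      have hDVFS : DV ∈ Hindman.FS b := by
        have hsum : DV = ∑ i ∈ V.biUnion K, b.get i := by
          rw [Finset.sum_biUnion hdisj]
        rw [hsum]
        refine Hindman.FS.finset_sum b _ ?_
        obtain ⟨n, hn⟩ := hVne
        obtain ⟨i, hi⟩ := hKne n
        exact ⟨i, Finset.mem_biUnion.2 ⟨n, hn, hi⟩⟩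
      have hsuppDV : WRPH.supp DV = V.biUnion fun n => WRPH.supp (D n) :=
        WRPH.supp_sum_blocks hKdvd hKub hcmono V
      have hDVne : (WRPH.supp DV).Nonempty := WRPH.supp_nonempty (hv _ hDVFS).1
      have hmemiff : ∀ i, i ∈ (s.subst ts).varList ↔
          i ∈ (WRPH.tmOfS f2 (WRPH.supp DV)).varList := by
        intro i
        rw [WRPH.varList_subst, List.mem_flatMap, WRPH.mem_varList_tmOfS f2 hDVne,
          hsuppDV, Finset.mem_biUnion]
        constructor
        · rintro ⟨j, hj, hij⟩
          exact ⟨j, List.mem_toFinset.2 hj, (WRPH.mem_varList_tmOfS f2 (hSne j) i).1 hij⟩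
        · rintro ⟨j, hj, hij⟩
          exact ⟨j, List.mem_toFinset.1 hj, (WRPH.mem_varList_tmOfS f2 (hSne j) i).2 hij⟩
      have hiff := hpre (s.subst ts) (WRPH.tmOfS f2 (WRPH.supp DV))
        (WRPH.orderly_subst hs htsadm) (WRPH.orderly_tmOfS f2 hDVne) hmemiff
      rw [h𝒞]
      beta_reduce
      rw [hiff]
      exact (hv _ hDVFS).2
    refine ⟨𝒞, hredC, ?_⟩
    by_cases hvv : v
    · left
      rintro _ ⟨s, hs, rfl⟩
      exact (hval s hs).2 hvv
    · right
      rw [Set.eq_empty_iff_forall_notMem]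
      rintro z ⟨⟨s, hs, rfl⟩, hz⟩
      exact hvv ((hval s hs).1 hz)
end

section
/- Every orderly semigroup is a Ramsey orderly algebra: let L be the first-order language with a single binary function symbol f, and let 𝒜 be an orderly L-algebra satisfying 𝒜(f (f t₁ t₂) t₃) = 𝒜(f t₁ (f t₂ t₃)) for all orderly terms t₁ < t₂ < t₃. Then for every reduction ℬ of 𝒜 and every X ⊆ ‖𝒜‖ there exists a reduction 𝒞 of ℬ that is homogeneous for X. -/
open Function Set

universe u v w

namespace OSRaux
open Tm List

/-! ### List helpers -/

lemma chain'_append' {α} {R : α → α → Prop} {l₁ l₂ : List α} :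
    (l₁ ++ l₂).Chain' R ↔ l₁.Chain' R ∧ l₂.Chain' R ∧ ∀ x ∈ l₁.getLast?, ∀ y ∈ l₂.head?, R x y :=
  List.isChain_append

lemma chain'_iff_pairwise' {α} {R : α → α → Prop} [IsTrans α R] {l : List α} :
    l.Chain' R ↔ l.Pairwise R :=
  List.isChain_iff_pairwise

lemma head?_append_ne {α} (l1 l2 : List α) (h : l1 ≠ []) : (l1 ++ l2).head? = l1.head? := by
  cases l1 <;> simp_all

lemma flatMap_ne_nil {α} (g : ℕ → List α) (hg : ∀ i, g i ≠ []) :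
    ∀ L : List ℕ, L ≠ [] → L.flatMap g ≠ [] := by
  intro L hL
  cases L with
  | nil => exact absurd rfl hL
  | cons i L =>
      simp only [List.flatMap_cons]
      intro h
      rcases List.append_eq_nil_iff.mp h with ⟨h1, _⟩
      exact hg i h1

lemma head?_flatMap {α} (g : ℕ → List α) (i : ℕ) (L : List ℕ) (hg : g i ≠ []) :
    ((i :: L).flatMap g).head? = (g i).head? := by
  simp only [List.flatMap_cons]
  exact head?_append_ne _ _ hg

lemma getLast?_flatMap {α} (g : ℕ → List α) (hg : ∀ i, g i ≠ []) :
    ∀ (L : List ℕ) (j : ℕ), L.getLast? = some j →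
      (L.flatMap g).getLast? = (g j).getLast? := by
  intro L
  induction L with
  | nil => intro j h; simp at h
  | cons i L ih =>
      intro j h
      cases L with
      | nil =>
          simp at h; subst h; simp
      | cons k L' =>
          rw [List.getLast?_cons_cons] at h
          simp only [List.flatMap_cons] at *
          rw [List.getLast?_append_of_ne_nil]
          · exact ih j h
          · exact flatMap_ne_nil g hg (k :: L') (by simp)

lemma chain'_head_le_getLast (L : List ℕ) (hc : L.Chain' (· < ·)) :
    ∀ x ∈ L.head?, ∀ y ∈ L.getLast?, x ≤ y := by
  intro x hx y hy
  cases L with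
  | nil => simp at hx
  | cons a L =>
      simp only [List.head?_cons, Option.mem_def, Option.some.injEq] at hx
      subst hx
      have hP := OSRaux.chain'_iff_pairwise'.mp hc
      have hmem : y ∈ a :: L := List.mem_of_mem_getLast? hy
      rcases List.mem_cons.mp hmem with h | h
      · exact le_of_eq h.symm
      · exact le_of_lt (List.rel_of_pairwise_cons hP h)

lemma chain'_flatMap (g : ℕ → List ℕ) (hne : ∀ i, g i ≠ [])
    (hc : ∀ i, (g i).Chain' (· < ·))
    (hlt : ∀ i j : ℕ, i < j → ∀ x ∈ (g i).getLast?, ∀ y ∈ (g j).head?, x < y) :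
    ∀ L : List ℕ, L.Chain' (· < ·) → (L.flatMap g).Chain' (· < ·) := by
  intro L
  induction L with
  | nil => intro h; exact h
  | cons i L ih =>
      intro hL
      simp only [List.flatMap_cons]
      rw [OSRaux.chain'_append']
      refine ⟨hc i, ih hL.tail, ?_⟩
      intro x hx y hy
      cases L with
      | nil => simp at hy
      | cons j L' =>
          rw [head?_flatMap g j L' (hne j)] at hy
          exact hlt i j ((List.isChain_cons.mp hL).1 j (by simp)) x hx y hy

/-! ### Term basics for `BinF` -/

lemma varList_func (c : BinF 2) (u : Fin 2 → Tm BinF) :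
    (Tm.func c u).varList = (u 0).varList ++ (u 1).varList := by
  show (List.finRange 2).flatMap _ = _
  rw [show List.finRange 2 = [0, 1] by rfl]
  simp

lemma varList_fapp (s t : Tm BinF) :
    (fapp s t).varList = s.varList ++ t.varList := by
  rw [fapp, varList_func]
  simp

lemma varList_ne_nil : ∀ t : Tm BinF, t.varList ≠ [] := by
  intro t
  induction t with
  | var i => simp [Tm.varList]
  | func c u ih =>
      cases c
      rw [varList_func]
      intro h
      exact ih 0 (List.append_eq_nil_iff.mp h).1

lemma orderly_iff (t : Tm BinF) : t.Orderly ↔ t.varList.Chain' (· < ·) := Iff.rfl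

lemma termLT_of_getLast_head {s t : Tm BinF}
    (h : ∀ x ∈ s.varList.getLast?, ∀ y ∈ t.varList.head?, x < y) : Tm.TermLT s t := by
  rcases Option.ne_none_iff_exists'.mp
    (fun hh => varList_ne_nil s (List.getLast?_eq_none_iff.mp hh)) with ⟨x, hx⟩
  rcases Option.ne_none_iff_exists'.mp
    (fun hh => varList_ne_nil t (List.head?_eq_none_iff.mp hh)) with ⟨y, hy⟩
  exact ⟨x, y, hx, hy, h x hx y hy⟩

lemma termLT_iff {s t : Tm BinF} :
    Tm.TermLT s t ↔ ∀ x ∈ s.varList.getLast?, ∀ y ∈ t.varList.head?, x < y := by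
  constructor
  · rintro ⟨i, j, hi, hj, hij⟩ x hx y hy
    rw [Option.mem_def] at hx hy
    rw [hi] at hx; rw [hj] at hy
    cases hx; cases hy; exact hij
  · exact termLT_of_getLast_head

lemma orderly_fapp_iff {s t : Tm BinF} :
    (fapp s t).Orderly ↔ s.Orderly ∧ t.Orderly ∧ Tm.TermLT s t := by
  rw [orderly_iff, varList_fapp, OSRaux.chain'_append', ← orderly_iff, ← orderly_iff, termLT_iff]

lemma orderly_func_iff {c : BinF 2} {u : Fin 2 → Tm BinF} :
    (Tm.func c u).Orderly ↔ (u 0).Orderly ∧ (u 1).Orderly ∧ Tm.TermLT (u 0) (u 1) := by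
  rw [orderly_iff, varList_func, OSRaux.chain'_append', ← orderly_iff, ← orderly_iff, termLT_iff]

lemma ordTuple_of (u : Fin 2 → Tm BinF) (h0 : (u 0).Orderly) (h1 : (u 1).Orderly)
    (h01 : Tm.TermLT (u 0) (u 1)) : OrdTuple u := by
  constructor
  · intro i; fin_cases i <;> assumption
  · intro i j hij
    fin_cases i <;> fin_cases j <;> simp only [Fin.mk_lt_mk] at hij <;> first | omega | exact h01

lemma ordTuple_pair {A B : Tm BinF} (hA : A.Orderly) (hB : B.Orderly) (hAB : Tm.TermLT A B) :
    OrdTuple ![A, B] :=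
  ordTuple_of _ (by simpa) (by simpa) (by simpa)

lemma varList_subst (σ : ℕ → Tm BinF) :
    ∀ s : Tm BinF, (s.subst σ).varList = s.varList.flatMap (fun i => (σ i).varList) := by
  intro s
  induction s with
  | var i => simp [Tm.subst, Tm.varList]
  | func c u ih =>
      cases c
      show (Tm.func BinF.f (fun i => (u i).subst σ)).varList = _
      rw [varList_func, varList_func, ih 0, ih 1, List.flatMap_append]

end OSRaux
namespace OSRaux

/-- Right-nested product of the terms `ts i`, `i ∈ L`. -/
def tprod (ts : ℕ → Tm BinF) : List ℕ → Tm BinF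
  | [] => ts 0
  | [i] => ts i
  | i :: j :: L => fapp (ts i) (tprod ts (j :: L))

lemma tprod_cons (ts : ℕ → Tm BinF) (i : ℕ) {L : List ℕ} (h : L ≠ []) :
    tprod ts (i :: L) = fapp (ts i) (tprod ts L) := by
  cases L with
  | nil => exact absurd rfl h
  | cons j L => rfl

lemma varList_tprod (ts : ℕ → Tm BinF) :
    ∀ L : List ℕ, L ≠ [] → (tprod ts L).varList = L.flatMap (fun i => (ts i).varList) := by
  intro L
  induction L with
  | nil => intro h; exact absurd rfl h
  | cons i L ih =>
      intro _
      cases L with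
      | nil => simp [tprod]
      | cons j L' =>
          rw [tprod_cons ts i (by simp), varList_fapp, ih (by simp)]
          simp [List.flatMap_cons]

section Admissible

variable {ts : ℕ → Tm BinF} (hts : Tm.Admissible ts)
include hts

lemma admissible_termLT : ∀ i j : ℕ, i < j → Tm.TermLT (ts i) (ts j) := by
  intro i j hij
  induction j with
  | zero => omega
  | succ j ih =>
      rcases Nat.lt_succ_iff_lt_or_eq.mp hij with h | h
      · -- i < j : combine ih with step j → j+1
        have h1 := ih h
        have h2 := hts.2 j
        rw [termLT_iff] at h1 h2 ⊢
        intro x hx y hy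
        -- x < (last of ts j)... need head ≤ last trick
        rcases Option.ne_none_iff_exists'.mp
          (fun hh => varList_ne_nil (ts j) (List.head?_eq_none_iff.mp hh)) with ⟨u, hu⟩
        rcases Option.ne_none_iff_exists'.mp
          (fun hh => varList_ne_nil (ts j) (List.getLast?_eq_none_iff.mp hh)) with ⟨v, hv⟩
        have hxu : x < u := h1 x hx u hu
        have huv : u ≤ v := chain'_head_le_getLast _ (hts.1 j) u hu v hv
        have hvy : v < y := h2 v hv y hy
        omega
      · subst h; exact hts.2 i

/-- Substitution along an admissible sequence preserves orderliness. -/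
lemma orderly_subst {s : Tm BinF} (hs : s.Orderly) : (s.subst ts).Orderly := by
  rw [orderly_iff, varList_subst]
  refine chain'_flatMap _ (fun i => varList_ne_nil (ts i)) (fun i => hts.1 i) ?_ _ hs
  intro i j hij x hx y hy
  exact (termLT_iff.mp (admissible_termLT hts i j hij)) x hx y hy

lemma termLT_subst {s t : Tm BinF} (hst : Tm.TermLT s t) :
    Tm.TermLT (s.subst ts) (t.subst ts) := by
  rcases hst with ⟨i, j, hi, hj, hij⟩
  apply termLT_of_getLast_head
  intro x hx y hy
  rw [Option.mem_def, varList_subst,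
    getLast?_flatMap _ (fun k => varList_ne_nil (ts k)) _ i hi] at hx
  rw [varList_subst] at hy
  obtain ⟨rest, hrest⟩ : ∃ rest, t.varList = j :: rest := by
    cases htl : t.varList with
    | nil => rw [htl] at hj; simp at hj
    | cons a r =>
        rw [htl] at hj; simp only [List.head?_cons, Option.some.injEq] at hj
        exact ⟨r, by rw [hj]⟩
  rw [hrest, head?_flatMap _ _ _ (varList_ne_nil (ts j))] at hy
  exact termLT_iff.mp (admissible_termLT hts i j hij) x hx y hy

end Admissible

end OSRaux
namespace OSRaux

section Main

variable {β : Type w} (𝒜 : Tm BinF → β) (h𝒜 : IsOrderlyAlg 𝒜)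
    (hassoc : ∀ t₁ t₂ t₃ : Tm BinF, t₁.Orderly → t₂.Orderly → t₃.Orderly →
      Tm.TermLT t₁ t₂ → Tm.TermLT t₂ t₃ →
      𝒜 (fapp (fapp t₁ t₂) t₃) = 𝒜 (fapp t₁ (fapp t₂ t₃)))
    {ts : ℕ → Tm BinF} (hts : Tm.Admissible ts)

lemma tprod_orderly (L : List ℕ) (hL : L ≠ [])
    (hg : (L.flatMap fun i => (ts i).varList).Chain' (· < ·)) : (tprod ts L).Orderly := by
  rw [orderly_iff, varList_tprod ts L hL]; exact hg

lemma termLT_tprod (L₁ L₂ : List ℕ) (h1 : L₁ ≠ []) (h2 : L₂ ≠ [])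
    (cross : ∀ x ∈ (L₁.flatMap fun i => (ts i).varList).getLast?,
      ∀ y ∈ (L₂.flatMap fun i => (ts i).varList).head?, x < y) :
    Tm.TermLT (tprod ts L₁) (tprod ts L₂) := by
  apply termLT_of_getLast_head
  rw [varList_tprod ts L₁ h1, varList_tprod ts L₂ h2]
  exact cross

lemma head?_flatMap_append (g : ℕ → List ℕ) (hg : ∀ i, g i ≠ []) (L L₂ : List ℕ) (hL : L ≠ []) :
    ((L ++ L₂).flatMap g).head? = (L.flatMap g).head? := by
  rw [List.flatMap_append]
  exact head?_append_ne _ _ (flatMap_ne_nil g hg L hL)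

include h𝒜 hassoc hts in
lemma assoc_collapse : ∀ L₁ L₂ : List ℕ, L₁ ≠ [] → L₂ ≠ [] →
    (((L₁ ++ L₂).flatMap fun i => (ts i).varList).Chain' (· < ·)) →
    𝒜 (fapp (tprod ts L₁) (tprod ts L₂)) = 𝒜 (tprod ts (L₁ ++ L₂)) := by
  intro L₁
  induction L₁ with
  | nil => intro L₂ h; exact absurd rfl h
  | cons i L₁' ih =>
      intro L₂ _ h2 hch
      set g : ℕ → List ℕ := fun i => (ts i).varList with hgdef
      have hgne : ∀ k, g k ≠ [] := fun k => varList_ne_nil (ts k)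
      by_cases h1' : L₁' = []
      · subst h1'
        rw [List.singleton_append, tprod_cons ts i h2]
        rfl
      · -- decompose the chain
        have hch' : ((i :: (L₁' ++ L₂)).flatMap g).Chain' (· < ·) := by
          rwa [List.cons_append] at hch
        rw [List.flatMap_cons, OSRaux.chain'_append'] at hch'
        obtain ⟨cgi, crest, cross_i⟩ := hch'
        have crest' := crest
        rw [List.flatMap_append, OSRaux.chain'_append'] at crest'
        obtain ⟨c1', c2, cross12⟩ := crest'
        have hne12 : L₁' ++ L₂ ≠ [] := by simp [h1']
        have o_i : (ts i).Orderly := hts.1 i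
        have o_1' : (tprod ts L₁').Orderly := tprod_orderly L₁' h1' c1'
        have o_2 : (tprod ts L₂).Orderly := tprod_orderly L₂ h2 c2
        have o_12 : (tprod ts (L₁' ++ L₂)).Orderly := by
          apply tprod_orderly _ hne12
          rw [List.flatMap_append, OSRaux.chain'_append']
          exact ⟨c1', c2, cross12⟩
        have lt_1'_2 : Tm.TermLT (tprod ts L₁') (tprod ts L₂) :=
          termLT_tprod L₁' L₂ h1' h2 cross12
        have lt_i_1' : Tm.TermLT (ts i) (tprod ts L₁') := by
          apply termLT_of_getLast_head
          rw [varList_tprod ts L₁' h1']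
          intro x hx y hy
          refine cross_i x hx y ?_
          rwa [head?_flatMap_append g hgne L₁' L₂ h1']
        have o_f12 : (fapp (tprod ts L₁') (tprod ts L₂)).Orderly :=
          orderly_fapp_iff.mpr ⟨o_1', o_2, lt_1'_2⟩
        have lt_i_f12 : Tm.TermLT (ts i) (fapp (tprod ts L₁') (tprod ts L₂)) := by
          apply termLT_of_getLast_head
          rw [varList_fapp, varList_tprod ts L₁' h1', varList_tprod ts L₂ h2,
            ← List.flatMap_append]
          intro x hx y hy
          exact cross_i x hx y hy
        have lt_i_12 : Tm.TermLT (ts i) (tprod ts (L₁' ++ L₂)) := by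
          apply termLT_of_getLast_head
          rw [varList_tprod ts _ hne12]
          exact cross_i
        have ihv : 𝒜 (fapp (tprod ts L₁') (tprod ts L₂)) = 𝒜 (tprod ts (L₁' ++ L₂)) :=
          ih L₂ h1' h2 crest
        calc 𝒜 (fapp (tprod ts (i :: L₁')) (tprod ts L₂))
            = 𝒜 (fapp (fapp (ts i) (tprod ts L₁')) (tprod ts L₂)) := by
              rw [tprod_cons ts i h1']
          _ = 𝒜 (fapp (ts i) (fapp (tprod ts L₁') (tprod ts L₂))) :=
              hassoc _ _ _ o_i o_1' o_2 lt_i_1' lt_1'_2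
          _ = 𝒜 (fapp (ts i) (tprod ts (L₁' ++ L₂))) := by
              apply h𝒜 2 BinF.f
              · exact ordTuple_pair o_i o_f12 lt_i_f12
              · exact ordTuple_pair o_i o_12 lt_i_12
              · intro k
                fin_cases k
                · simp
                · simpa using ihv
          _ = 𝒜 (tprod ts ((i :: L₁') ++ L₂)) := by
              rw [List.cons_append, tprod_cons ts i hne12]

include h𝒜 hassoc hts in
lemma subst_eq_tprod : ∀ s : Tm BinF, s.Orderly → 𝒜 (s.subst ts) = 𝒜 (tprod ts s.varList) := by
  intro s
  induction s with
  | var i => intro _; rfl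
  | func c u ih =>
      cases c
      intro hs
      obtain ⟨h0, h1, h01⟩ := orderly_func_iff.mp hs
      have hsub : ((Tm.func BinF.f u).subst ts).Orderly := orderly_subst hts hs
      have hgood : ((((u 0).varList ++ (u 1).varList)).flatMap
          fun i => (ts i).varList).Chain' (· < ·) := by
        rw [← varList_func BinF.f u, ← varList_subst]
        exact hsub
      have hgood' := hgood
      rw [List.flatMap_append, OSRaux.chain'_append'] at hgood'
      obtain ⟨c0, c1, cross⟩ := hgood'
      have o_t0 : (tprod ts (u 0).varList).Orderly :=
        tprod_orderly _ (varList_ne_nil (u 0)) c0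
      have o_t1 : (tprod ts (u 1).varList).Orderly :=
        tprod_orderly _ (varList_ne_nil (u 1)) c1
      have lt_t : Tm.TermLT (tprod ts (u 0).varList) (tprod ts (u 1).varList) :=
        termLT_tprod _ _ (varList_ne_nil (u 0)) (varList_ne_nil (u 1)) cross
      have step : 𝒜 (Tm.func BinF.f fun k => (u k).subst ts)
          = 𝒜 (Tm.func BinF.f ![tprod ts (u 0).varList, tprod ts (u 1).varList]) := by
        apply h𝒜 2 BinF.f
        · exact ordTuple_of _ (orderly_subst hts h0) (orderly_subst hts h1)
            (termLT_subst hts h01)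
        · exact (ordTuple_pair o_t0 o_t1 lt_t : OrdTuple _)
        · intro k
          fin_cases k
          · simpa using ih 0 h0
          · simpa using ih 1 h1
      calc 𝒜 ((Tm.func BinF.f u).subst ts)
          = 𝒜 (Tm.func BinF.f fun k => (u k).subst ts) := rfl
        _ = 𝒜 (fapp (tprod ts (u 0).varList) (tprod ts (u 1).varList)) := step
        _ = 𝒜 (tprod ts ((u 0).varList ++ (u 1).varList)) :=
            assoc_collapse 𝒜 h𝒜 hassoc hts _ _ (varList_ne_nil (u 0)) (varList_ne_nil (u 1)) hgood
        _ = 𝒜 (tprod ts (Tm.func BinF.f u).varList) := by rw [varList_func]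

end Main

end OSRaux
namespace OSRaux
open Hindman

/-- Right-nested product of `b i`, `i ∈ L`, in a semigroup. -/
def sprod {M : Type*} [Mul M] (b : Stream' M) : List ℕ → M
  | [] => b 0
  | [i] => b i
  | i :: j :: L => b i * sprod b (j :: L)

lemma sprod_cons {M : Type*} [Mul M] (b : Stream' M) (i : ℕ) {L : List ℕ} (h : L ≠ []) :
    sprod b (i :: L) = b i * sprod b L := by
  cases L with
  | nil => exact absurd rfl h
  | cons j L => rfl

lemma sprod_shift {M : Type*} [Mul M] (b : Stream' M) :
    ∀ L : List ℕ, L ≠ [] → sprod b.tail L = sprod b (L.map (· + 1)) := by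
  intro L
  induction L with
  | nil => intro h; exact absurd rfl h
  | cons i L ih =>
      intro _
      cases L with
      | nil => rfl
      | cons j L' =>
          have h1 : (j :: L') ≠ [] := by simp
          have h2 : ((j :: L').map (· + 1)) ≠ [] := by simp
          rw [sprod_cons b.tail i h1, List.map_cons, sprod_cons b (i+1) h2, ih h1]
          rfl

lemma map_pred_succ (l : List ℕ) (h : ∀ x ∈ l, 0 < x) : (l.map (· - 1)).map (· + 1) = l := by
  rw [List.map_map]
  conv_rhs => rw [← List.map_id l]
  apply List.map_congr_left
  intro x hx
  have := h x hx
  simp; omega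

lemma chain'_map_pred (l : List ℕ) (hc : l.Chain' (· < ·)) (h : ∀ x ∈ l, 0 < x) :
    (l.map (· - 1)).Chain' (· < ·) := by
  rw [OSRaux.chain'_iff_pairwise'] at hc ⊢
  rw [List.pairwise_map]
  refine hc.imp_of_mem ?_
  intro a b ha hb hab
  have := h a ha
  omega

lemma sum_map_pred : ∀ l : List ℕ, (∀ x ∈ l, 0 < x) → (l.map (· - 1)).sum + l.length = l.sum := by
  intro l
  induction l with
  | nil => intro _; rfl
  | cons a l ih =>
      intro h
      have ha := h a (by simp)
      have := ih (fun x hx => h x (by simp [hx]))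
      simp only [List.map_cons, List.sum_cons, List.length_cons]
      omega

lemma pos_of_chain'_cons {a : ℕ} {l : List ℕ} (hc : (a :: l).Chain' (· < ·)) :
    ∀ x ∈ l, a < x := by
  intro x hx
  exact List.rel_of_pairwise_cons (OSRaux.chain'_iff_pairwise'.mp hc) hx

/-- Every right-nested ordered product belongs to the FP set. -/
lemma sprod_mem_FP {M : Type*} [Semigroup M] :
    ∀ (n : ℕ) (b : Stream' M) (L : List ℕ), L.sum + L.length ≤ n →
      L.Chain' (· < ·) → L ≠ [] → sprod b L ∈ FP b := by
  intro n
  induction n with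
  | zero =>
      intro b L h _ hne
      exfalso
      have h1 : L.length ≤ 0 := le_trans (Nat.le_add_left _ _) h
      exact hne (List.length_eq_zero_iff.mp (Nat.le_zero.mp h1))
  | succ n ih =>
      intro b L hsum hch hne
      cases L with
      | nil => exact absurd rfl hne
      | cons i L' =>
          cases i with
          | zero =>
              cases L' with
              | nil => exact FP.head b
              | cons j L'' =>
                  have hpos : ∀ x ∈ j :: L'', 0 < x := pos_of_chain'_cons hch
                  set L₀ := (j :: L'').map (· - 1) with hL₀
                  have hne₀ : L₀ ≠ [] := by simp [hL₀]
                  have hch' : (j :: L'').Chain' (· < ·) := hch.tail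
                  have hch₀ : L₀.Chain' (· < ·) := chain'_map_pred _ hch' hpos
                  have hb : L₀.sum + L₀.length ≤ n := by
                    have h1 := sum_map_pred (j :: L'') hpos
                    have h2 : (0 :: j :: L'').sum + (0 :: j :: L'').length ≤ n + 1 := hsum
                    simp only [List.sum_cons, List.length_cons, List.length_map, hL₀] at h1 h2 ⊢
                    omega
                  have hrec := ih b.tail L₀ hb hch₀ hne₀
                  have key : sprod b (0 :: j :: L'') = b.head * sprod b.tail L₀ := by
                    rw [sprod_cons b 0 (by simp : (j : ℕ) :: L'' ≠ []),
                      sprod_shift b L₀ hne₀, hL₀, map_pred_succ _ hpos]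
                    rfl
                  rw [key]
                  exact FP.cons b _ hrec
          | succ k =>
              have hpos : ∀ x ∈ (k+1) :: L', 0 < x := by
                intro x hx
                rcases List.mem_cons.mp hx with h | h
                · omega
                · have := pos_of_chain'_cons hch x h; omega
              set L₀ := ((k+1) :: L').map (· - 1) with hL₀
              have hne₀ : L₀ ≠ [] := by simp [hL₀]
              have hch₀ : L₀.Chain' (· < ·) := chain'_map_pred _ hch hpos
              have hb : L₀.sum + L₀.length ≤ n := by
                have h1 := sum_map_pred ((k+1) :: L') hpos
                simp only [List.sum_cons, List.length_cons, List.length_map, hL₀] at h1 hsum ⊢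
                omega
              have hrec := ih b.tail L₀ hb hch₀ hne₀
              have key : sprod b ((k+1) :: L') = sprod b.tail L₀ := by
                rw [sprod_shift b L₀ hne₀, hL₀, map_pred_succ _ hpos]
              rw [key]
              exact FP.tail b _ hrec

/-- Every element of the FP set is a right-nested ordered product. -/
lemma mem_FP_sprod {M : Type*} [Semigroup M] {b : Stream' M} :
    ∀ m ∈ FP b, ∃ L : List ℕ, L.Chain' (· < ·) ∧ L ≠ [] ∧ m = sprod b L := by
  intro m hm
  induction hm with
  | head' a => exact ⟨[0], List.isChain_singleton 0, by simp, rfl⟩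
  | tail' a m h ih =>
      obtain ⟨L, hc, hne, hL⟩ := ih
      refine ⟨L.map (· + 1), ?_, by simp [hne], ?_⟩
      · rw [OSRaux.chain'_iff_pairwise', List.pairwise_map]
        exact (OSRaux.chain'_iff_pairwise'.mp hc).imp (by omega)
      · rw [hL, sprod_shift a L hne]
  | cons' a m h ih =>
      obtain ⟨L, hc, hne, hL⟩ := ih
      refine ⟨0 :: L.map (· + 1), ?_, by simp, ?_⟩
      · rw [OSRaux.chain'_iff_pairwise', List.pairwise_cons]
        constructor
        · intro x hx
          rcases List.mem_map.mp hx with ⟨y, _, rfl⟩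
          omega
        · rw [List.pairwise_map]
          exact (OSRaux.chain'_iff_pairwise'.mp hc).imp (by omega)
      · rw [sprod_cons a 0 (by simp [hne]), hL, sprod_shift a L hne]
        rfl

end OSRaux
namespace OSRaux
open Hindman

/-- The word of an element of the free semigroup. -/
def toL (x : FreeSemigroup ℕ) : List ℕ := x.head :: x.tail

/-- The stream of generators. -/
def ofS : Stream' (FreeSemigroup ℕ) := fun n => FreeSemigroup.of n

lemma toL_mul (x y : FreeSemigroup ℕ) : toL (x * y) = toL x ++ toL y := by
  simp [toL]

lemma toL_ne_nil (x : FreeSemigroup ℕ) : toL x ≠ [] := by simp [toL]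

lemma toL_sprod (b : Stream' (FreeSemigroup ℕ)) :
    ∀ L : List ℕ, L ≠ [] → toL (sprod b L) = L.flatMap (fun i => toL (b i)) := by
  intro L
  induction L with
  | nil => intro h; exact absurd rfl h
  | cons i L ih =>
      intro _
      cases L with
      | nil => simp [sprod]
      | cons j L' =>
          rw [sprod_cons b i (by simp), toL_mul, ih (by simp)]
          simp [List.flatMap_cons]

lemma chain_toL_of_mem_FP {m : FreeSemigroup ℕ} (hm : m ∈ FP ofS) :
    (toL m).Chain' (· < ·) := by
  obtain ⟨L, hc, hne, rfl⟩ := mem_FP_sprod m hm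
  rw [toL_sprod ofS L hne]
  have h : L.flatMap (fun i => toL (ofS i)) = L := by
    simp [toL, ofS, FreeSemigroup.of]
  rw [h]; exact hc

end OSRaux

theorem orderly_semigroup_is_ramsey' {β : Type w} (𝒜 : Tm BinF → β)
    (h𝒜 : IsOrderlyAlg 𝒜)
    (hassoc : ∀ t₁ t₂ t₃ : Tm BinF, t₁.Orderly → t₂.Orderly → t₃.Orderly →
      Tm.TermLT t₁ t₂ → Tm.TermLT t₂ t₃ →
      𝒜 (fapp (fapp t₁ t₂) t₃) = 𝒜 (fapp t₁ (fapp t₂ t₃))) :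
    RamseyOA 𝒜 := by
  classical
  intro ℬ hred X _hX
  obtain ⟨ts, hts, hB⟩ := hred
  open OSRaux Hindman in
  -- color the increasing words by the value of the corresponding product
  set C1 : Set (FreeSemigroup ℕ) :=
    {m | m ∈ FP OSRaux.ofS ∧ 𝒜 (OSRaux.tprod ts (OSRaux.toL m)) ∈ X} with hC1
  set C2 : Set (FreeSemigroup ℕ) :=
    {m | m ∈ FP OSRaux.ofS ∧ 𝒜 (OSRaux.tprod ts (OSRaux.toL m)) ∉ X} with hC2
  have hcov : FP OSRaux.ofS ⊆ ⋃₀ {C1, C2} := by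
    intro m hm
    by_cases h : 𝒜 (OSRaux.tprod ts (OSRaux.toL m)) ∈ X
    · exact ⟨C1, by simp, hm, h⟩
    · exact ⟨C2, by simp, hm, h⟩
  obtain ⟨c, hc, b, hFPb⟩ :=
    Hindman.FP_partition_regular OSRaux.ofS {C1, C2} (Set.toFinite _) hcov
  have hsubFP : ∀ m ∈ FP b, m ∈ FP OSRaux.ofS := by
    intro m hm
    rcases (by simpa using hc : c = C1 ∨ c = C2) with rfl | rfl
    · exact (hFPb hm).1
    · exact (hFPb hm).1
  have hcell : (∀ m ∈ FP b, 𝒜 (OSRaux.tprod ts (OSRaux.toL m)) ∈ X) ∨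
      (∀ m ∈ FP b, 𝒜 (OSRaux.tprod ts (OSRaux.toL m)) ∉ X) := by
    rcases (by simpa using hc : c = C1 ∨ c = C2) with rfl | rfl
    · exact Or.inl fun m hm => (hFPb hm).2
    · exact Or.inr fun m hm => (hFPb hm).2
  -- the new admissible sequence of terms
  set us : ℕ → Tm BinF := fun n => OSRaux.tprod Tm.var (OSRaux.toL (b n)) with hus
  have hbmem : ∀ n, b n ∈ FP b := fun n => FP.singleton b n
  have hw : ∀ n, (OSRaux.toL (b n)).Chain' (· < ·) :=
    fun n => OSRaux.chain_toL_of_mem_FP (hsubFP _ (hbmem n))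
  have cross : ∀ n m : ℕ, n < m →
      ∀ x ∈ (OSRaux.toL (b n)).getLast?, ∀ y ∈ (OSRaux.toL (b m)).head?, x < y := by
    intro n m hnm
    have h := OSRaux.chain_toL_of_mem_FP (hsubFP _ (FP.mul_two b n m hnm))
    rw [OSRaux.toL_mul] at h
    exact (OSRaux.chain'_append'.mp h).2.2
  have hus_var : ∀ n, (us n).varList = OSRaux.toL (b n) := by
    intro n
    rw [hus]
    rw [OSRaux.varList_tprod _ _ (OSRaux.toL_ne_nil _)]
    simp [Tm.varList]
  have husadm : Tm.Admissible us := by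
    constructor
    · intro n
      rw [OSRaux.orderly_iff, hus_var]
      exact hw n
    · intro n
      apply OSRaux.termLT_of_getLast_head
      rw [hus_var n, hus_var (n+1)]
      exact cross n (n+1) (by omega)
  refine ⟨fun s => ℬ (s.subst us), ⟨us, husadm, fun s _ => rfl⟩, ?_⟩
  -- value computation
  have keyval : ∀ s : Tm BinF, s.Orderly →
      ℬ (s.subst us) = 𝒜 (OSRaux.tprod ts (OSRaux.toL (OSRaux.sprod b s.varList))) := by
    intro s hs
    have hsub : (s.subst us).Orderly := OSRaux.orderly_subst husadm hs
    rw [hB _ hsub, OSRaux.subst_eq_tprod 𝒜 h𝒜 hassoc hts _ hsub]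
    congr 2
    rw [OSRaux.varList_subst, OSRaux.toL_sprod b _ (OSRaux.varList_ne_nil s)]
    simp only [hus_var]
  have smem : ∀ s : Tm BinF, s.Orderly → OSRaux.sprod b s.varList ∈ FP b := fun s hs =>
    OSRaux.sprod_mem_FP _ b _ le_rfl hs (OSRaux.varList_ne_nil s)
  rcases hcell with hin | hout
  · left
    rintro y ⟨s, hs, rfl⟩
    have h := hin _ (smem s hs)
    rw [← keyval s hs] at h
    exact h
  · right
    apply Set.eq_empty_iff_forall_notMem.mpr
    rintro y ⟨⟨s, hs, rfl⟩, hy⟩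
    have hy' : ℬ (s.subst us) ∈ X := hy
    rw [keyval s hs] at hy'
    exact hout _ (smem s hs) hy'

/-- Every orderly semigroup is a Ramsey orderly algebra: for
every reduction `ℬ` of `𝒜` and every `X ⊆ ‖𝒜‖` some reduction of `ℬ` is
homogeneous for `X`. -/
theorem orderly_semigroup_is_ramsey {β : Type w} (𝒜 : Tm BinF → β)
    (h𝒜 : IsOrderlyAlg 𝒜)
    (hassoc : ∀ t₁ t₂ t₃ : Tm BinF, t₁.Orderly → t₂.Orderly → t₃.Orderly →
      Tm.TermLT t₁ t₂ → Tm.TermLT t₂ t₃ →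
      𝒜 (fapp (fapp t₁ t₂) t₃) = 𝒜 (fapp t₁ (fapp t₂ t₃))) :
    RamseyOA 𝒜 := by
  exact orderly_semigroup_is_ramsey' 𝒜 h𝒜 hassoc
end
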